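/- arXiv:2003.05031 — 7 statements merged into one kernel-verified Lean document; each statement's English description precedes it below -/
import Mathlib

section
/- Let k be an algebraically closed field, let G be a group and H a normal subgroup of G. Let V and W be finite-dimensional k-vector spaces and let ρ : G → GL(V) and σ : G → GL(W) be representations such that the restrictions of ρ and σ to H are irreducible (V ≠ 0 and the only ρ(H)-invariant subspaces of V are 0 and V, and likewise for σ and W) and isomorphic as representations of H. Then there exist a group homomorphism χ : G → kˣ with H contained in the kernel of χ and a k-linear isomorphism T : V → W such that T ∘ ρ(g) = χ(g) • (σ(g) ∘ T) for every g ∈ G; that is, σ is isomorphic to the twist of ρ by a character of G/H. -/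
/-- Schur: an endomorphism commuting with an irreducible action is scalar. -/
lemma schur_aux_twist {k : Type*} [Field k] [IsAlgClosed k]
    {G : Type*} [Group G] (H : Subgroup G)
    {V : Type*} [AddCommGroup V] [Module k V] [FiniteDimensional k V] [Nontrivial V]
    (ρ : G →* (V ≃ₗ[k] V))
    (hVirr : ∀ p : Submodule k V, (∀ h ∈ H, ∀ v ∈ p, ρ h v ∈ p) → p = ⊥ ∨ p = ⊤)
    (f : V →ₗ[k] V) (comm : ∀ h ∈ H, ∀ v : V, f (ρ h v) = ρ h (f v)) :
    ∃ c : k, ∀ v : V, f v = c • v := by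
  obtain ⟨c, hc⟩ := Module.End.exists_eigenvalue (f : Module.End k V)
  refine ⟨c, fun v => ?_⟩
  have hinv : ∀ h ∈ H, ∀ v ∈ Module.End.eigenspace f c, ρ h v ∈ Module.End.eigenspace f c := by
    intro h hh w hw
    rw [Module.End.mem_eigenspace_iff] at hw ⊢
    rw [comm h hh, hw, map_smul]
  rcases hVirr _ hinv with hbot | htop
  · exact absurd hbot hc
  · have : v ∈ Module.End.eigenspace f c := htop ▸ Submodule.mem_top
    exact Module.End.mem_eigenspace_iff.mp this

/-- Lemma on extending an isomorphism of irreducible restricted representations to a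
character twist (Lemma `L:ext` of the paper). -/
theorem twist_of_restriction_iso
    {k : Type*} [Field k] [IsAlgClosed k]
    {G : Type*} [Group G] (H : Subgroup G) [H.Normal]
    {V W : Type*} [AddCommGroup V] [Module k V] [FiniteDimensional k V]
    [AddCommGroup W] [Module k W] [FiniteDimensional k W]
    (ρ : G →* (V ≃ₗ[k] V)) (σ : G →* (W ≃ₗ[k] W))
    (hVne : ∃ v : V, v ≠ 0)
    (hVirr : ∀ p : Submodule k V, (∀ h ∈ H, ∀ v ∈ p, ρ h v ∈ p) → p = ⊥ ∨ p = ⊤)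
    (hWne : ∃ w : W, w ≠ 0)
    (hWirr : ∀ q : Submodule k W, (∀ h ∈ H, ∀ w ∈ q, σ h w ∈ q) → q = ⊥ ∨ q = ⊤)
    (e : V ≃ₗ[k] W) (he : ∀ h ∈ H, ∀ v : V, e (ρ h v) = σ h (e v)) :
    ∃ (χ : G →* kˣ) (T : V ≃ₗ[k] W),
      (∀ h ∈ H, χ h = 1) ∧
      ∀ g : G, ∀ v : V, T (ρ g v) = (χ g : k) • σ g (T v) := by
  obtain ⟨v0, hv0⟩ := hVne
  haveI : Nontrivial V := ⟨⟨v0, 0, hv0⟩⟩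
  -- inverse intertwining
  have he' : ∀ h ∈ H, ∀ w : W, e.symm (σ h w) = ρ h (e.symm w) := by
    intro h hh w
    apply e.injective
    rw [e.apply_symm_apply, he h hh, e.apply_symm_apply]
  have key : ∀ g : G, ∃ c : k, ∀ v : V, e (ρ g v) = c • σ g (e v) := by
    intro g
    set f : V →ₗ[k] V :=
      e.symm.toLinearMap ∘ₗ (σ g).symm.toLinearMap ∘ₗ e.toLinearMap ∘ₗ (ρ g).toLinearMap
      with hf
    have comm : ∀ h ∈ H, ∀ v : V, f (ρ h v) = ρ h (f v) := by
      intro h hh v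
      have hconj : g * h * g⁻¹ ∈ H := Subgroup.Normal.conj_mem ‹H.Normal› h hh g
      have hmulρ : ∀ (a b : G) (v : V), ρ (a * b) v = ρ a (ρ b v) := by
        intro a b v; rw [map_mul]; rfl
      have h1 : ρ g (ρ h v) = ρ (g * h * g⁻¹) (ρ g v) := by
        rw [← hmulρ, ← hmulρ]; congr 1; group
      have h2 : σ (g * h * g⁻¹) = σ g * σ h * (σ g)⁻¹ := by
        rw [map_mul, map_mul, map_inv]
      simp only [hf, LinearMap.comp_apply, LinearEquiv.coe_coe]
      rw [h1, he _ hconj, h2]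
      have h3 : ∀ w : W, (σ g).symm ((σ g * σ h * (σ g)⁻¹) w) = σ h ((σ g).symm w) := by
        intro w
        have : (σ g * σ h * (σ g)⁻¹) w = σ g (σ h ((σ g)⁻¹ w)) := rfl
        rw [this, LinearEquiv.symm_apply_apply]
        rfl
      rw [h3, he' _ hh]
    obtain ⟨c, hc⟩ := schur_aux_twist H ρ hVirr f comm
    refine ⟨c, fun v => ?_⟩
    have := hc v
    simp only [hf, LinearMap.comp_apply, LinearEquiv.coe_coe] at this
    have h4 : (σ g).symm (e (ρ g v)) = e (c • v) := by
      apply e.symm.injective; rw [e.symm_apply_apply]; exact this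
    calc e (ρ g v) = σ g ((σ g).symm (e (ρ g v))) := ((σ g).apply_symm_apply _).symm
      _ = σ g (e (c • v)) := by rw [h4]
      _ = c • σ g (e v) := by rw [map_smul, map_smul]
  choose c hc using key
  have hcan : ∀ (a b : k) (w : W), w ≠ 0 → a • w = b • w → a = b := by
    intro a b w hw hab
    exact smul_left_injective k hw hab
  have hEne : ∀ (g : G), σ g (e v0) ≠ 0 := by
    intro g hcon
    exact hv0 (by simpa using e.injective ((σ g).injective (by simpa using hcon)))
  have hcne : ∀ g : G, c g ≠ 0 := by
    intro g hcg
    have := hc g v0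
    rw [hcg, zero_smul] at this
    exact hv0 (by simpa using (ρ g).injective (e.injective (by simpa using this)))
  have hmul : ∀ g₁ g₂ : G, c (g₁ * g₂) = c g₁ * c g₂ := by
    intro g₁ g₂
    have h1 : e (ρ (g₁ * g₂) v0) = c (g₁ * g₂) • σ (g₁ * g₂) (e v0) := hc _ v0
    have h2 : e (ρ (g₁ * g₂) v0) = (c g₁ * c g₂) • σ (g₁ * g₂) (e v0) := by
      have hρ : ρ (g₁ * g₂) v0 = ρ g₁ (ρ g₂ v0) := by
        rw [map_mul]; rfl
      have hσ : ∀ w : W, σ (g₁ * g₂) w = σ g₁ (σ g₂ w) := by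
        intro w; rw [map_mul]; rfl
      rw [hρ, hc g₁, hc g₂, map_smul, hσ, smul_smul]
    exact hcan _ _ _ (hEne _) (h1.symm.trans h2)
  refine ⟨MonoidHom.mk' (fun g => Units.mk0 (c g) (hcne g)) (fun g₁ g₂ => by
      ext; exact hmul g₁ g₂), e, ?_, ?_⟩
  · intro h hh
    ext
    have h1 : e (ρ h v0) = c h • σ h (e v0) := hc h v0
    have h2 : e (ρ h v0) = (1 : k) • σ h (e v0) := by rw [one_smul]; exact he h hh v0
    exact hcan _ _ _ (hEne _) (h1.symm.trans h2)
  · exact fun g v => hc g v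
end

section
/- Let 𝔽_q be a finite field, ψ : 𝔽_q → ℂˣ a nontrivial additive character, and α, β multiplicative characters of 𝔽_q with α ≠ β. Then for every t ∈ 𝔽_q, Σ_{y ∈ 𝔽_qˣ} ψ((t−1)·y) · α(t·y) · β⁻¹(y) = g(ψ, α·β⁻¹) · α(t) · (β·α⁻¹)(t−1). -/
private theorem sum_units_aux {F : Type*} [Field F] [Fintype F] [DecidableEq F]
    (f : F → ℂ) (h0 : f 0 = 0) :
    ∑ x : F, f x = ∑ y : Fˣ, f y := by
  have h1 : ∑ y : Fˣ, f ↑y = ∑ x : {a : F // a ≠ 0}, f ↑x :=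
    Fintype.sum_equiv unitsEquivNeZero _ _ (fun y => by simp [unitsEquivNeZero])
  rw [Fintype.sum_eq_add_sum_compl 0 f, h0, zero_add, h1,
    ← Finset.sum_subtype (s := ({0}ᶜ : Finset F)) (p := fun a : F => a ≠ 0) (by simp) f]

/-- The rank-one finite-field hypergeometric evaluation (Section 7.4 of the paper). -/
theorem rank_one_hypergeometric_sum
    {F : Type*} [Field F] [Fintype F] [DecidableEq F]
    (ψ : AddChar F ℂ) (hψ : ψ ≠ 1)
    (α β : MulChar F ℂ) (hαβ : α ≠ β) (t : F) :
    ∑ y : Fˣ, ψ ((t - 1) * (y : F)) * α (t * (y : F)) * β⁻¹ (y : F)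
      = gaussSum (α * β⁻¹) ψ * α t * (β * α⁻¹) (t - 1) := by
  set χ := α * β⁻¹ with hχdef
  have hχ : χ ≠ 1 := by
    intro h
    exact hαβ (by rwa [mul_inv_eq_one] at h)
  have hba : β * α⁻¹ = χ⁻¹ := by
    rw [hχdef, mul_inv, inv_inv, mul_comm]
  have step1 : ∑ y : Fˣ, ψ ((t - 1) * (y : F)) * α (t * (y : F)) * β⁻¹ (y : F)
      = α t * ∑ y : Fˣ, ψ ((t - 1) * (y : F)) * χ (y : F) := by
    rw [Finset.mul_sum]
    refine Finset.sum_congr rfl fun y _ => ?_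
    rw [map_mul α, MulChar.mul_apply]
    ring
  rw [step1, hba]
  rcases eq_or_ne t 1 with rfl | ht
  · simp only [sub_self, zero_mul, AddChar.map_zero_eq_one, one_mul]
    rw [MulChar.map_nonunit χ⁻¹ (by simp), mul_zero,
      ← sum_units_aux (fun x => χ x) (χ.map_nonunit (by simp)),
      MulChar.sum_eq_zero_of_ne_one hχ, mul_zero]
  · have hu : t - 1 ≠ 0 := sub_ne_zero.mpr ht
    set u : Fˣ := Units.mk0 (t - 1) hu with hudef
    have key : ∑ y : Fˣ, ψ ((t - 1) * (y : F)) * χ (y : F)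
        = gaussSum χ (AddChar.mulShift ψ u) := by
      rw [gaussSum, sum_units_aux (fun x => χ x * AddChar.mulShift ψ u x)
        (by simp [χ.map_nonunit not_isUnit_zero])]
      refine Finset.sum_congr rfl fun y _ => ?_
      simp [AddChar.mulShift_apply, hudef, mul_comm]
    have hχu : χ⁻¹ (t - 1) * χ (t - 1) = 1 := by
      rw [MulChar.inv_apply, ← map_mul, Ring.inverse_mul_cancel _ (IsUnit.mk0 _ hu), map_one]
    rw [key, ← gaussSum_mulShift χ ψ u]
    have huv : (u : F) = t - 1 := rfl
    calc α t * gaussSum χ (AddChar.mulShift ψ u)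
        = α t * gaussSum χ (AddChar.mulShift ψ u) * (χ⁻¹ (t - 1) * χ (t - 1)) := by
          rw [hχu, mul_one]
      _ = χ ↑u * gaussSum χ (AddChar.mulShift ψ u) * α t * χ⁻¹ (t - 1) := by
          rw [huv]; ring
end

section
/- Let 𝔽_q be a finite field, ψ : 𝔽_q → ℂˣ a nontrivial additive character, and α₁, α₂, β₁, β₂ multiplicative characters of 𝔽_q with α₁ ≠ β₁ and α₂ ≠ β₂. Then for every t ∈ 𝔽_q with t ≠ 0, the sum Σ ψ(x₁+x₂−y₁−y₂) · α₁(x₁) · α₂(x₂) · β₁⁻¹(y₁) · β₂⁻¹(y₂), taken over all quadruples (x₁,x₂,y₁,y₂) ∈ 𝔽_q⁴ with y₁ ≠ 0, y₂ ≠ 0 and x₁·x₂ = t·y₁·y₂, equals g(ψ, α₁β₁⁻¹) · g(ψ, α₂β₂⁻¹) · α₂(t) · Σ_{s ∈ 𝔽_q} (α₁β₂⁻¹)(s) · (β₁α₁⁻¹)(s−1) · (β₂α₂⁻¹)(t−s). -/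
open Finset

private lemma aux_gauss {F : Type*} [Field F] [Fintype F]
    (ψ : AddChar F ℂ) (χ : MulChar F ℂ) (hχ : χ ≠ 1) (c : F) :
    ∑ y : F, χ y * ψ (c * y) = χ⁻¹ c * gaussSum χ ψ := by
  rcases eq_or_ne c 0 with rfl | hc
  · simp only [zero_mul, AddChar.map_zero_eq_one, mul_one]
    rw [MulChar.sum_eq_zero_of_ne_one hχ, MulChar.map_nonunit _ (by simp), zero_mul]
  · rw [gaussSum, Finset.mul_sum]
    refine Fintype.sum_equiv (Equiv.mulLeft₀ c hc) _ _ fun y => ?_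
    simp only [Equiv.mulLeft₀_apply]
    have h1 : χ⁻¹ c * χ c = 1 := by
      rw [← MulChar.mul_apply, inv_mul_cancel, MulChar.one_apply (isUnit_iff_ne_zero.mpr hc)]
    calc χ y * ψ (c * y) = (χ⁻¹ c * χ c) * (χ y * ψ (c * y)) := by rw [h1, one_mul]
      _ = χ⁻¹ c * (χ (c * y) * ψ (c * y)) := by rw [map_mul χ c y]; ring


/-- The multiplicative-convolution reduction of the finite-field ₂F₁ character sum
(Lemma 7.2 / Section 7.4 of the paper). -/
theorem hypergeometric_sum_convolution
    {F : Type*} [Field F] [Fintype F] [DecidableEq F]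
    (ψ : AddChar F ℂ) (hψ : ψ ≠ 1)
    (α₁ α₂ β₁ β₂ : MulChar F ℂ) (h₁ : α₁ ≠ β₁) (h₂ : α₂ ≠ β₂)
    (t : F) (ht : t ≠ 0) :
    ∑ v ∈ Finset.univ.filter
        (fun v : F × F × F × F =>
          v.2.2.1 ≠ 0 ∧ v.2.2.2 ≠ 0 ∧ v.1 * v.2.1 = t * v.2.2.1 * v.2.2.2),
      ψ (v.1 + v.2.1 - v.2.2.1 - v.2.2.2) * α₁ v.1 * α₂ v.2.1 * β₁⁻¹ v.2.2.1 * β₂⁻¹ v.2.2.2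
      = gaussSum (α₁ * β₁⁻¹) ψ * gaussSum (α₂ * β₂⁻¹) ψ * α₂ t *
          ∑ s : F, (α₁ * β₂⁻¹) s * (β₁ * α₁⁻¹) (s - 1) * (β₂ * α₂⁻¹) (t - s) := by
  have hχ₁ : α₁ * β₁⁻¹ ≠ 1 := fun h => h₁ (by rwa [mul_inv_eq_one] at h)
  have hχ₂ : α₂ * β₂⁻¹ ≠ 1 := fun h => h₂ (by rwa [mul_inv_eq_one] at h)
  set f : F × F × F → ℂ := fun w =>
    ψ (w.1 * w.2.1 + t * w.2.2 * w.1⁻¹ - w.2.1 - w.2.2) * α₁ (w.1 * w.2.1) *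
      α₂ (t * w.2.2 * w.1⁻¹) * β₁⁻¹ w.2.1 * β₂⁻¹ w.2.2 with hf
  -- Step A: reindex LHS to a sum over all of F³
  have stepA : (∑ v ∈ Finset.univ.filter
        (fun v : F × F × F × F =>
          v.2.2.1 ≠ 0 ∧ v.2.2.2 ≠ 0 ∧ v.1 * v.2.1 = t * v.2.2.1 * v.2.2.2),
      ψ (v.1 + v.2.1 - v.2.2.1 - v.2.2.2) * α₁ v.1 * α₂ v.2.1 * β₁⁻¹ v.2.2.1 * β₂⁻¹ v.2.2.2)
      = ∑ w : F × F × F, f w := by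
    rw [show (∑ w : F × F × F, f w) =
        ∑ w ∈ Finset.univ.filter
          (fun w : F × F × F => w.1 ≠ 0 ∧ w.2.1 ≠ 0 ∧ w.2.2 ≠ 0), f w from by
      rw [Finset.sum_filter_of_ne]
      intro w _ hne
      by_contra hw
      rw [not_and_or, not_and_or] at hw
      apply hne
      rcases hw with h | h | h
      · rw [not_ne_iff] at h
        simp [hf, h, MulChar.map_nonunit]
      · rw [not_ne_iff] at h
        simp [hf, h, MulChar.map_nonunit]
      · rw [not_ne_iff] at h
        simp [hf, h, MulChar.map_nonunit]]
    refine Finset.sum_bij' (fun v _ => (v.1 * v.2.2.1⁻¹, v.2.2.1, v.2.2.2))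
      (fun w _ => (w.1 * w.2.1, t * w.2.2 * w.1⁻¹, w.2.1, w.2.2)) ?_ ?_ ?_ ?_ ?_
    · intro v hv
      simp only [mem_filter, mem_univ, true_and] at hv ⊢
      obtain ⟨hy₁, hy₂, hc⟩ := hv
      have hx₁ : v.1 ≠ 0 := by
        intro h0
        rw [h0, zero_mul] at hc
        exact (mul_ne_zero (mul_ne_zero ht hy₁) hy₂) hc.symm
      exact ⟨mul_ne_zero hx₁ (inv_ne_zero hy₁), hy₁, hy₂⟩
    · intro w hw
      simp only [mem_filter, mem_univ, true_and] at hw ⊢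
      obtain ⟨hs, hy₁, hy₂⟩ := hw
      refine ⟨hy₁, hy₂, ?_⟩
      field_simp
    · intro v hv
      simp only [mem_filter, mem_univ, true_and] at hv
      obtain ⟨hy₁, hy₂, hc⟩ := hv
      have hx₁ : v.1 ≠ 0 := by
        intro h0
        rw [h0, zero_mul] at hc
        exact (mul_ne_zero (mul_ne_zero ht hy₁) hy₂) hc.symm
      have e1 : v.1 * v.2.2.1⁻¹ * v.2.2.1 = v.1 := by field_simp
      have e2 : t * v.2.2.2 * (v.1 * v.2.2.1⁻¹)⁻¹ = v.2.1 := by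
        field_simp
        rw [hc]; ring
      exact Prod.ext e1 (Prod.ext e2 rfl)
    · intro w hw
      simp only [mem_filter, mem_univ, true_and] at hw
      obtain ⟨hs, hy₁, hy₂⟩ := hw
      have e1 : w.1 * w.2.1 * w.2.1⁻¹ = w.1 := by field_simp
      exact Prod.ext e1 rfl
    · intro v hv
      simp only [mem_filter, mem_univ, true_and] at hv
      obtain ⟨hy₁, hy₂, hc⟩ := hv
      have hx₁ : v.1 ≠ 0 := by
        intro h0
        rw [h0, zero_mul] at hc
        exact (mul_ne_zero (mul_ne_zero ht hy₁) hy₂) hc.symm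
      simp only [hf]
      have e1 : v.1 * v.2.2.1⁻¹ * v.2.2.1 = v.1 := by field_simp
      have e2 : t * v.2.2.2 * (v.1 * v.2.2.1⁻¹)⁻¹ = v.2.1 := by
        field_simp
        rw [hc]; ring
      rw [e1, e2]
  rw [stepA]
  rw [Fintype.sum_prod_type]
  -- Step B
  have stepB : ∀ s : F, (∑ w : F × F, f (s, w))
      = gaussSum (α₁ * β₁⁻¹) ψ * gaussSum (α₂ * β₂⁻¹) ψ *
        (α₁ s * α₂ (t * s⁻¹) * (α₁ * β₁⁻¹)⁻¹ (s - 1) * (α₂ * β₂⁻¹)⁻¹ (t * s⁻¹ - 1)) := by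
    intro s
    rw [Fintype.sum_prod_type]
    have key : ∀ y₁ : F, (∑ y₂ : F, f (s, y₁, y₂))
        = (α₁ s * ((α₁ * β₁⁻¹) y₁ * ψ ((s - 1) * y₁))) *
          (α₂ (t * s⁻¹) * ∑ y₂ : F, (α₂ * β₂⁻¹) y₂ * ψ ((t * s⁻¹ - 1) * y₂)) := by
      intro y₁
      rw [Finset.mul_sum, Finset.mul_sum]
      refine Finset.sum_congr rfl fun y₂ _ => ?_
      simp only [hf, MulChar.mul_apply]
      have harg : s * y₁ + t * y₂ * s⁻¹ - y₁ - y₂ = (s - 1) * y₁ + (t * s⁻¹ - 1) * y₂ := by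
        ring
      rw [harg, AddChar.map_add_eq_mul, map_mul α₁ s y₁,
        show t * y₂ * s⁻¹ = t * s⁻¹ * y₂ from by ring, map_mul α₂ (t * s⁻¹) y₂]
      ring
    rw [Finset.sum_congr rfl fun y₁ _ => key y₁]
    rw [← Finset.sum_mul, ← Finset.mul_sum, aux_gauss ψ _ hχ₁, aux_gauss ψ _ hχ₂]
    ring
  rw [Finset.sum_congr rfl fun s _ => stepB s]
  -- Step C
  have key : ∀ s : F,
      α₁ s * α₂ (t * s⁻¹) * (α₁ * β₁⁻¹)⁻¹ (s - 1) * (α₂ * β₂⁻¹)⁻¹ (t * s⁻¹ - 1)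
      = α₂ t * ((α₁ * β₂⁻¹) s * (β₁ * α₁⁻¹) (s - 1) * (β₂ * α₂⁻¹) (t - s)) := by
    intro s
    have e1 : (α₁ * β₁⁻¹)⁻¹ = β₁ * α₁⁻¹ := by group
    have e2 : (α₂ * β₂⁻¹)⁻¹ = β₂ * α₂⁻¹ := by group
    rcases eq_or_ne s 0 with rfl | hs
    · rw [e1, e2]
      simp [MulChar.map_nonunit, MulChar.mul_apply]
    · have h2 : t * s⁻¹ - 1 = (t - s) * s⁻¹ := by field_simp
      have e3 : (β₂ * α₂⁻¹) s⁻¹ = β₂⁻¹ s * α₂ s := by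
        rw [MulChar.mul_apply, MulChar.inv_apply' α₂, inv_inv, ← MulChar.inv_apply' β₂]
      have e5 : α₂ s⁻¹ * α₂ s = 1 := by
        rw [← map_mul α₂, inv_mul_cancel₀ hs, MulChar.map_one]
      rw [e1, e2, h2, map_mul (β₂ * α₂⁻¹) (t - s) s⁻¹, map_mul α₂ t s⁻¹, e3,
        MulChar.mul_apply α₁ β₂⁻¹]
      linear_combination (α₂ t * α₁ s * β₂⁻¹ s * (β₁ * α₁⁻¹) (s - 1) *
        (β₂ * α₂⁻¹) (t - s)) * e5
  calc ∑ s : F, gaussSum (α₁ * β₁⁻¹) ψ * gaussSum (α₂ * β₂⁻¹) ψ *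
        (α₁ s * α₂ (t * s⁻¹) * (α₁ * β₁⁻¹)⁻¹ (s - 1) * (α₂ * β₂⁻¹)⁻¹ (t * s⁻¹ - 1))
      = ∑ s : F, gaussSum (α₁ * β₁⁻¹) ψ * gaussSum (α₂ * β₂⁻¹) ψ * α₂ t *
        ((α₁ * β₂⁻¹) s * (β₁ * α₁⁻¹) (s - 1) * (β₂ * α₂⁻¹) (t - s)) := by
        refine Finset.sum_congr rfl fun s _ => ?_
        rw [key s]; ring
    _ = gaussSum (α₁ * β₁⁻¹) ψ * gaussSum (α₂ * β₂⁻¹) ψ * α₂ t *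
        ∑ s : F, (α₁ * β₂⁻¹) s * (β₁ * α₁⁻¹) (s - 1) * (β₂ * α₂⁻¹) (t - s) := by
        rw [Finset.mul_sum]
end

section
/- Let 𝔽_q be a finite field, ψ : 𝔽_q → ℂˣ a nontrivial additive character, and α₁, α₂, β₁, β₂ multiplicative characters of 𝔽_q with α₁ ≠ β₁ and α₂ ≠ β₂. Then the sum Σ ψ(x₁+x₂−y₁−y₂) · α₁(x₁) · α₂(x₂) · β₁⁻¹(y₁) · β₂⁻¹(y₂), taken over all quadruples (x₁,x₂,y₁,y₂) ∈ 𝔽_q⁴ with y₁ ≠ 0, y₂ ≠ 0 and x₁·x₂ = y₁·y₂, equals (β₁α₁⁻¹)(−1) · g(ψ, α₁β₁⁻¹) · g(ψ, α₂β₂⁻¹) · J(α₁β₂⁻¹, β₁β₂α₁⁻¹α₂⁻¹). -/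
open Finset

private lemma gauss_aux {F : Type*} [Field F] [Fintype F] [DecidableEq F]
    (ψ : AddChar F ℂ) {χ : MulChar F ℂ} (hχ : χ ≠ 1) (c : F) :
    ∑ y : F, χ y * ψ (c * y) = χ⁻¹ c * gaussSum χ ψ := by
  rcases eq_or_ne c 0 with rfl | hc
  · simp only [zero_mul, AddChar.map_zero_eq_one, mul_one,
      MulChar.sum_eq_zero_of_ne_one hχ, MulChar.map_zero, zero_mul]
  · have h := gaussSum_mulShift χ ψ (Units.mk0 c hc)
    rw [gaussSum] at h
    simp only [AddChar.mulShift_apply, Units.val_mk0] at h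
    have hcn : χ c ≠ 0 := by
      have h1 : χ c * χ c⁻¹ = 1 := by rw [← map_mul, mul_inv_cancel₀ hc, map_one]
      exact left_ne_zero_of_mul_eq_one h1
    rw [MulChar.inv_apply_eq_inv', ← h]
    field_simp

private lemma core_identity {F : Type*} [Field F] [Fintype F] [DecidableEq F]
    (α₁ α₂ β₁ β₂ : MulChar F ℂ) (u : F) :
    α₁ u * α₂ u⁻¹ * (α₁ * β₁⁻¹)⁻¹ (u - 1) * (α₂ * β₂⁻¹)⁻¹ (u⁻¹ - 1)
      = (β₂ * α₂⁻¹) (-1) * ((α₁ * β₂⁻¹) u * (β₁ * β₂ * α₁⁻¹ * α₂⁻¹) (u - 1)) := by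
  rcases eq_or_ne u 0 with rfl | hu
  · simp [MulChar.map_zero, MulChar.mul_apply]
  · have h1 : u⁻¹ - 1 = -1 * u⁻¹ * (u - 1) := by field_simp; ring
    rw [h1]
    have hcan : α₂ u⁻¹ * α₂ u = 1 := by rw [← map_mul, inv_mul_cancel₀ hu, map_one]
    simp only [MulChar.mul_apply, MulChar.inv_apply', mul_inv, inv_inv, inv_neg, inv_one,
      map_mul]
    linear_combination (α₁ u * α₁ (u - 1)⁻¹ * β₁ (u - 1) * α₂ (-1) * α₂ (u - 1)⁻¹ *
      β₂ (-1) * β₂ u⁻¹ * β₂ (u - 1)) * hcan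

private lemma step_A {F : Type*} [Field F] [Fintype F] [DecidableEq F]
    (ψ : AddChar F ℂ) (α₁ α₂ β₁ β₂ : MulChar F ℂ) :
    ∑ v ∈ Finset.univ.filter
        (fun v : F × F × F × F =>
          v.2.2.1 ≠ 0 ∧ v.2.2.2 ≠ 0 ∧ v.1 * v.2.1 = v.2.2.1 * v.2.2.2),
      ψ (v.1 + v.2.1 - v.2.2.1 - v.2.2.2) * α₁ v.1 * α₂ v.2.1 * β₁⁻¹ v.2.2.1 * β₂⁻¹ v.2.2.2
    = ∑ w : F × F × F,
        (α₁ w.1 * α₂ w.1⁻¹) * ((α₁ * β₁⁻¹) w.2.1 * ψ ((w.1 - 1) * w.2.1)) *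
          ((α₂ * β₂⁻¹) w.2.2 * ψ ((w.1⁻¹ - 1) * w.2.2)) := by
  rw [← Finset.sum_filter_of_ne (p := fun w : F × F × F => w.1 ≠ 0 ∧ w.2.1 ≠ 0 ∧ w.2.2 ≠ 0)
    (by
      rintro ⟨u, y₁, y₂⟩ - hne
      refine ⟨fun h0 => hne ?_, fun h0 => hne ?_, fun h0 => hne ?_⟩
      · rw [show u = (0 : F) from h0]
        simp only [MulChar.map_zero, inv_zero, zero_mul, mul_zero]
      · rw [show y₁ = (0 : F) from h0]
        simp only [MulChar.map_zero, inv_zero, zero_mul, mul_zero]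
      · rw [show y₂ = (0 : F) from h0]
        simp only [MulChar.map_zero, inv_zero, zero_mul, mul_zero])]
  refine Finset.sum_nbij' (fun v : F × F × F × F => (v.1 / v.2.2.1, v.2.2.1, v.2.2.2))
    (fun w : F × F × F => (w.1 * w.2.1, w.1⁻¹ * w.2.2, w.2.1, w.2.2)) ?_ ?_ ?_ ?_ ?_
  · rintro ⟨x₁, x₂, y₁, y₂⟩ hv
    simp only [mem_filter, mem_univ, true_and] at hv ⊢
    obtain ⟨hy₁, hy₂, hxy⟩ := hv
    have hx₁ : x₁ ≠ 0 := by
      intro h; rw [h, zero_mul] at hxy; exact mul_ne_zero hy₁ hy₂ hxy.symm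
    exact ⟨div_ne_zero hx₁ hy₁, hy₁, hy₂⟩
  · rintro ⟨u, y₁, y₂⟩ hw
    simp only [mem_filter, mem_univ, true_and] at hw ⊢
    obtain ⟨hu, hy₁, hy₂⟩ := hw
    exact ⟨hy₁, hy₂, by field_simp⟩
  · rintro ⟨x₁, x₂, y₁, y₂⟩ hv
    simp only [mem_filter, mem_univ, true_and] at hv
    obtain ⟨hy₁, hy₂, hxy⟩ := hv
    have hx₁ : x₁ ≠ 0 := by
      intro h; rw [h, zero_mul] at hxy; exact mul_ne_zero hy₁ hy₂ hxy.symm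
    simp only [Prod.mk.injEq, and_true]
    refine ⟨div_mul_cancel₀ _ hy₁, ?_⟩
    rw [inv_div]
    field_simp
    linear_combination hxy.symm
  · rintro ⟨u, y₁, y₂⟩ hw
    simp only [mem_filter, mem_univ, true_and] at hw
    obtain ⟨hu, hy₁, hy₂⟩ := hw
    simp only [Prod.mk.injEq, and_true]
    exact mul_div_cancel_right₀ _ hy₁
  · rintro ⟨x₁, x₂, y₁, y₂⟩ hv
    simp only [mem_filter, mem_univ, true_and] at hv
    obtain ⟨hy₁, hy₂, hxy⟩ := hv
    have hx₁ : x₁ ≠ 0 := by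
      intro h; rw [h, zero_mul] at hxy; exact mul_ne_zero hy₁ hy₂ hxy.symm
    dsimp only
    set u := x₁ / y₁ with hu
    clear_value u
    have hu1 : u * y₁ = x₁ := by rw [hu]; exact div_mul_cancel₀ _ hy₁
    have hu2 : u⁻¹ * y₂ = x₂ := by
      rw [hu, inv_div]; field_simp; linear_combination hxy.symm
    rw [← hu1, ← hu2]
    rw [show u * y₁ + u⁻¹ * y₂ - y₁ - y₂ = (u - 1) * y₁ + (u⁻¹ - 1) * y₂ by ring,
      AddChar.map_add_eq_mul, map_mul α₁, map_mul α₂, MulChar.mul_apply, MulChar.mul_apply]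
    ring

private lemma step_E {F : Type*} [Field F] [Fintype F] [DecidableEq F]
    (χ lam : MulChar F ℂ) :
    ∑ u : F, χ u * lam (u - 1) = lam (-1) * jacobiSum χ lam := by
  rw [jacobiSum, Finset.mul_sum]
  refine Finset.sum_congr rfl fun u _ => ?_
  rw [show u - 1 = -1 * (1 - u) by ring, map_mul lam]
  ring

/-- Evaluation at t = 1 of the finite-field ₂F₁ character sum (Corollary 7.3 of the paper). -/
theorem hypergeometric_sum_at_one
    {F : Type*} [Field F] [Fintype F] [DecidableEq F]
    (ψ : AddChar F ℂ) (hψ : ψ ≠ 1)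
    (α₁ α₂ β₁ β₂ : MulChar F ℂ) (h₁ : α₁ ≠ β₁) (h₂ : α₂ ≠ β₂) :
    ∑ v ∈ Finset.univ.filter
        (fun v : F × F × F × F =>
          v.2.2.1 ≠ 0 ∧ v.2.2.2 ≠ 0 ∧ v.1 * v.2.1 = v.2.2.1 * v.2.2.2),
      ψ (v.1 + v.2.1 - v.2.2.1 - v.2.2.2) * α₁ v.1 * α₂ v.2.1 * β₁⁻¹ v.2.2.1 * β₂⁻¹ v.2.2.2
      = (β₁ * α₁⁻¹) (-1) * gaussSum (α₁ * β₁⁻¹) ψ * gaussSum (α₂ * β₂⁻¹) ψ *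
          jacobiSum (α₁ * β₂⁻¹) (β₁ * β₂ * α₁⁻¹ * α₂⁻¹) := by
  have hc₁ : α₁ * β₁⁻¹ ≠ 1 := fun h => h₁ (mul_inv_eq_one.mp h)
  have hc₂ : α₂ * β₂⁻¹ ≠ 1 := fun h => h₂ (mul_inv_eq_one.mp h)
  have hsum : ∀ u : F,
      (∑ p : F × F, (α₁ u * α₂ u⁻¹) * ((α₁ * β₁⁻¹) p.1 * ψ ((u - 1) * p.1)) *
        ((α₂ * β₂⁻¹) p.2 * ψ ((u⁻¹ - 1) * p.2)))
      = gaussSum (α₁ * β₁⁻¹) ψ * gaussSum (α₂ * β₂⁻¹) ψ *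
          ((β₂ * α₂⁻¹) (-1) * ((α₁ * β₂⁻¹) u * (β₁ * β₂ * α₁⁻¹ * α₂⁻¹) (u - 1))) := by
    intro u
    rw [Fintype.sum_prod_type]
    dsimp only
    simp only [← Finset.mul_sum]
    rw [← Finset.sum_mul, ← Finset.mul_sum]
    rw [gauss_aux ψ hc₁, gauss_aux ψ hc₂]
    rw [show α₁ u * α₂ u⁻¹ * ((α₁ * β₁⁻¹)⁻¹ (u - 1) * gaussSum (α₁ * β₁⁻¹) ψ) *
          ((α₂ * β₂⁻¹)⁻¹ (u⁻¹ - 1) * gaussSum (α₂ * β₂⁻¹) ψ)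
        = gaussSum (α₁ * β₁⁻¹) ψ * gaussSum (α₂ * β₂⁻¹) ψ *
          (α₁ u * α₂ u⁻¹ * (α₁ * β₁⁻¹)⁻¹ (u - 1) * (α₂ * β₂⁻¹)⁻¹ (u⁻¹ - 1)) by ring,
      core_identity α₁ α₂ β₁ β₂ u]
  have hconst : (β₂ * α₂⁻¹) (-1 : F) * (β₁ * β₂ * α₁⁻¹ * α₂⁻¹) (-1 : F)
      = (β₁ * α₁⁻¹) (-1 : F) := by
    have ha : α₂ (-1 : F) * α₂ (-1) = 1 := by
      rw [← map_mul, neg_mul_neg, mul_one, map_one]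
    have hb : β₂ (-1 : F) * β₂ (-1) = 1 := by
      rw [← map_mul, neg_mul_neg, mul_one, map_one]
    simp only [MulChar.mul_apply, MulChar.inv_apply', inv_neg, inv_one]
    linear_combination (β₁ (-1 : F) * α₁ (-1) * β₂ (-1) * β₂ (-1)) * ha +
      (β₁ (-1 : F) * α₁ (-1)) * hb
  calc ∑ v ∈ Finset.univ.filter
        (fun v : F × F × F × F =>
          v.2.2.1 ≠ 0 ∧ v.2.2.2 ≠ 0 ∧ v.1 * v.2.1 = v.2.2.1 * v.2.2.2),
      ψ (v.1 + v.2.1 - v.2.2.1 - v.2.2.2) * α₁ v.1 * α₂ v.2.1 * β₁⁻¹ v.2.2.1 * β₂⁻¹ v.2.2.2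
      = ∑ w : F × F × F,
        (α₁ w.1 * α₂ w.1⁻¹) * ((α₁ * β₁⁻¹) w.2.1 * ψ ((w.1 - 1) * w.2.1)) *
          ((α₂ * β₂⁻¹) w.2.2 * ψ ((w.1⁻¹ - 1) * w.2.2)) := step_A ψ α₁ α₂ β₁ β₂
    _ = ∑ u : F, gaussSum (α₁ * β₁⁻¹) ψ * gaussSum (α₂ * β₂⁻¹) ψ *
          ((β₂ * α₂⁻¹) (-1) * ((α₁ * β₂⁻¹) u * (β₁ * β₂ * α₁⁻¹ * α₂⁻¹) (u - 1))) := by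
        rw [Fintype.sum_prod_type]
        exact Finset.sum_congr rfl fun u _ => by dsimp only; exact hsum u
    _ = gaussSum (α₁ * β₁⁻¹) ψ * gaussSum (α₂ * β₂⁻¹) ψ *
          ((β₂ * α₂⁻¹) (-1) * ((β₁ * β₂ * α₁⁻¹ * α₂⁻¹) (-1) *
            jacobiSum (α₁ * β₂⁻¹) (β₁ * β₂ * α₁⁻¹ * α₂⁻¹))) := by
        rw [← Finset.mul_sum, ← Finset.mul_sum,
          step_E (α₁ * β₂⁻¹) (β₁ * β₂ * α₁⁻¹ * α₂⁻¹)]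
    _ = (β₁ * α₁⁻¹) (-1) * gaussSum (α₁ * β₁⁻¹) ψ * gaussSum (α₂ * β₂⁻¹) ψ *
          jacobiSum (α₁ * β₂⁻¹) (β₁ * β₂ * α₁⁻¹ * α₂⁻¹) := by
        linear_combination (gaussSum (α₁ * β₁⁻¹) ψ * gaussSum (α₂ * β₂⁻¹) ψ *
          jacobiSum (α₁ * β₂⁻¹) (β₁ * β₂ * α₁⁻¹ * α₂⁻¹)) * hconst
end

section
/- Let 𝔽_q be a finite field of odd cardinality q, let ε denote the quadratic character of 𝔽_q (the unique multiplicative character of order 2), let ψ : 𝔽_q → ℂˣ be a nontrivial additive character, and let χ be any multiplicative character of 𝔽_q. Then g(ψ, χ²) · g(ψ, ε) = χ(4) · g(ψ, χ) · g(ψ, ε·χ). -/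
open Finset

section aux

variable {F : Type*} [Field F] [Fintype F] [DecidableEq F]

/-- A multiplicative character of order dividing 2 which is nontrivial equals the
quadratic character (pointwise, after casting). -/
private lemma eps_eq_quadChar (hF2 : ringChar F ≠ 2)
    (ε : MulChar F ℂ) (hε1 : ε ≠ 1) (hε2 : ε ^ 2 = 1) (x : F) :
    ε x = ((quadraticChar F x : ℤ) : ℂ) := by
  have h2 : ∀ y : F, y ≠ 0 → ε y * ε y = 1 := by
    intro y hy
    have h : (ε * ε) y = (1 : MulChar F ℂ) y := by rw [← sq, hε2]
    rwa [MulChar.mul_apply, MulChar.one_apply (isUnit_iff_ne_zero.mpr hy)] at h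
  have hs : ∀ y : F, y ≠ 0 → IsSquare y → ε y = 1 := by
    rintro y hy ⟨z, rfl⟩
    have hz : z ≠ 0 := by rintro rfl; simp at hy
    rw [map_mul]; exact h2 z hz
  have hns : ∀ y : F, y ≠ 0 → ¬IsSquare y → ε y = -1 := by
    intro y hy hnsq
    rcases mul_self_eq_one_iff.mp (h2 y hy) with h1 | h1
    · exfalso
      apply hε1
      apply MulChar.ext
      intro u
      by_cases hu : IsSquare (u : F)
      · rw [hs u u.ne_zero hu, MulChar.one_apply_coe]
      · have hu0 : (u : F) ≠ 0 := u.ne_zero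
        have hyi : (y : F)⁻¹ * u ≠ 0 := mul_ne_zero (inv_ne_zero hy) hu0
        have hqy : quadraticChar F y = -1 :=
          quadraticChar_neg_one_iff_not_isSquare.mpr hnsq
        have hqu : quadraticChar F (u : F) = -1 :=
          quadraticChar_neg_one_iff_not_isSquare.mpr hu
        have hqyi : quadraticChar F y⁻¹ = -1 := by
          have h := map_mul (quadraticChar F) y y⁻¹
          rw [mul_inv_cancel₀ hy, map_one, hqy] at h
          linarith
        have hsq2 : IsSquare ((y : F)⁻¹ * u) := by
          refine (quadraticChar_one_iff_isSquare hyi).mp ?_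
          rw [map_mul, hqyi, hqu]; ring
        have he : ε (u : F) = ε y * ε (y⁻¹ * u) := by
          rw [← map_mul, mul_inv_cancel_left₀ hy]
        rw [he, h1, hs _ hyi hsq2, one_mul, MulChar.one_apply_coe]
    · exact h1
  by_cases hx : x = 0
  · rw [hx, ε.map_zero, quadraticChar_zero]
    norm_num
  by_cases hsq : IsSquare x
  · rw [hs x hx hsq, (quadraticChar_one_iff_isSquare hx).mpr hsq]; norm_num
  · rw [hns x hx hsq, quadraticChar_neg_one_iff_not_isSquare.mpr hsq]; norm_num

/-- Summing `f (y ^ 2)` over `F` counts fibers via the quadratic character. -/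
private lemma sum_sq_eq (hF2 : ringChar F ≠ 2) (f : F → ℂ) :
    ∑ y : F, f (y ^ 2) = ∑ u : F, (1 + ((quadraticChar F u : ℤ) : ℂ)) * f u := by
  rw [← Finset.sum_fiberwise univ (fun y : F => y ^ 2) fun y => f (y ^ 2)]
  refine Finset.sum_congr rfl fun u _ => ?_
  have hcongr : ∀ y ∈ univ.filter (fun y : F => y ^ 2 = u), f (y ^ 2) = f u := by
    intro y hy
    rw [(Finset.mem_filter.mp hy).2]
  rw [Finset.sum_congr rfl hcongr, Finset.sum_const, nsmul_eq_mul]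
  congr 1
  have hset : {x : F | x ^ 2 = u}.toFinset = univ.filter (fun y : F => y ^ 2 = u) := by
    ext y; simp
  have h := quadraticChar_card_sqrts hF2 u
  rw [hset] at h
  have h' : ((#(univ.filter (fun y : F => y ^ 2 = u)) : ℕ) : ℂ)
      = ((quadraticChar F u : ℤ) : ℂ) + 1 := by
    exact_mod_cast congrArg (fun n : ℤ => (n : ℂ)) h
  rw [h']
  ring

/-- The key Jacobi-sum identity: `χ(4) J(χ,χ) = J(ε,χ)`. -/
private lemma key_jacobi (hF2 : ringChar F ≠ 2)
    (ε : MulChar F ℂ) (hε : ∀ x, ε x = ((quadraticChar F x : ℤ) : ℂ))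
    (χ : MulChar F ℂ) (hχ : χ ≠ 1) :
    χ 4 * jacobiSum χ χ = jacobiSum ε χ := by
  have h2 : (2 : F) ≠ 0 := Ring.two_ne_zero hF2
  have step1 : χ 4 * jacobiSum χ χ = ∑ x : F, χ (4 * (x * (1 - x))) := by
    rw [jacobiSum, Finset.mul_sum]
    refine Finset.sum_congr rfl fun x _ => ?_
    rw [map_mul, map_mul]
  have step2 : ∑ x : F, χ (4 * (x * (1 - x))) = ∑ y : F, χ (1 - y ^ 2) := by
    rw [← Equiv.sum_comp ((Equiv.addRight (1 : F)).trans
      (Equiv.mulRight₀ (2 : F)⁻¹ (inv_ne_zero h2))) fun x => χ (4 * (x * (1 - x)))]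
    refine Finset.sum_congr rfl fun y _ => ?_
    show χ (4 * ((y + 1) * 2⁻¹ * (1 - (y + 1) * 2⁻¹))) = χ (1 - y ^ 2)
    congr 1
    field_simp
    ring
  have step3 : ∑ y : F, χ (1 - y ^ 2)
      = ∑ u : F, (1 + ((quadraticChar F u : ℤ) : ℂ)) * χ (1 - u) :=
    sum_sq_eq hF2 fun u => χ (1 - u)
  have step4 : ∑ u : F, (1 + ((quadraticChar F u : ℤ) : ℂ)) * χ (1 - u)
      = ∑ u : F, χ (1 - u) + ∑ u : F, ε u * χ (1 - u) := by
    rw [← Finset.sum_add_distrib]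
    refine Finset.sum_congr rfl fun u _ => ?_
    rw [hε u]; ring
  have step5 : ∑ u : F, χ (1 - u) = 0 := by
    have h := Equiv.sum_comp (Equiv.subLeft (1 : F)) fun v : F => χ v
    simpa using h.trans (MulChar.sum_eq_zero_of_ne_one hχ)
  rw [step1, step2, step3, step4, step5, zero_add, jacobiSum]

end aux

/-- The Gauss-sum duplication formula g(ψ,χ²)g(ψ,ε) = χ(4)g(ψ,χ)g(ψ,εχ)
(Section 10.2 of the paper). -/
theorem gaussSum_duplication
    {F : Type*} [Field F] [Fintype F] [DecidableEq F]
    (hodd : Odd (Fintype.card F))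
    (ε : MulChar F ℂ) (hε1 : ε ≠ 1) (hε2 : ε ^ 2 = 1)
    (ψ : AddChar F ℂ) (hψ : ψ ≠ 1) (χ : MulChar F ℂ) :
    gaussSum (χ ^ 2) ψ * gaussSum ε ψ = χ 4 * gaussSum χ ψ * gaussSum (ε * χ) ψ := by
  have hF2 : ringChar F ≠ 2 := by
    intro h
    have h' := FiniteField.even_card_iff_char_two.mp h
    have := Nat.odd_iff.mp hodd
    omega
  have h2 : (2 : F) ≠ 0 := Ring.two_ne_zero hF2
  have h4 : (4 : F) ≠ 0 := by
    have : (4 : F) = 2 * 2 := by norm_num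
    rw [this]; exact mul_ne_zero h2 h2
  have hε : ∀ x, ε x = ((quadraticChar F x : ℤ) : ℂ) := eps_eq_quadChar hF2 ε hε1 hε2
  have hεinv : ε⁻¹ = ε := by
    have h : ε * ε = 1 := by rw [← sq, hε2]
    exact inv_eq_of_mul_eq_one_right h
  have hε4 : ε 4 = 1 := by
    rw [show (4 : F) = 2 ^ 2 by norm_num, hε, quadraticChar_sq_one' h2]
    norm_num
  by_cases hχ2 : χ ^ 2 = 1
  · by_cases hχ1 : χ = 1
    · subst hχ1
      rw [one_pow, mul_one, MulChar.one_apply (isUnit_iff_ne_zero.mpr h4)]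
      ring
    · have hχε : χ = ε := by
        have hχq := eps_eq_quadChar hF2 χ hχ1 hχ2
        exact MulChar.ext' fun a => by rw [hχq, hε]
      subst hχε
      rw [hε2, ← sq, hε2, hε4]
      ring
  · have hχ1 : χ ≠ 1 := by rintro rfl; simp at hχ2
    have hχχ : χ * χ ≠ 1 := by rwa [← sq]
    have hεχ : ε * χ ≠ 1 := by
      intro h
      have hc : χ = ε := by rw [← hεinv]; exact (inv_eq_of_mul_eq_one_right h).symm
      exact hχ2 (by rw [hc, hε2])
    have hψp : ψ.IsPrimitive := AddChar.IsPrimitive.of_ne_one hψ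
    have hcard : (Fintype.card F : ℂ) ≠ 0 := Nat.cast_ne_zero.mpr Fintype.card_ne_zero
    have hgχ : gaussSum χ ψ ≠ 0 := gaussSum_ne_zero_of_nontrivial hcard hχ1 hψp
    have A : gaussSum (χ * χ) ψ * jacobiSum χ χ = gaussSum χ ψ * gaussSum χ ψ :=
      jacobiSum_mul_nontrivial hχχ ψ
    have B : gaussSum (ε * χ) ψ * jacobiSum ε χ = gaussSum ε ψ * gaussSum χ ψ :=
      jacobiSum_mul_nontrivial hεχ ψ
    have K : χ 4 * jacobiSum χ χ = jacobiSum ε χ := key_jacobi hF2 ε hε χ hχ1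
    apply mul_right_cancel₀ hgχ
    rw [sq]
    linear_combination (-gaussSum (χ * χ) ψ) * B
      - gaussSum (χ * χ) ψ * gaussSum (ε * χ) ψ * K
      + χ 4 * gaussSum (ε * χ) ψ * A
end

section
/- For every real a > 0 and every real x with 0 < x < 1/9, ₂F₁(a, a + 1/3; 2a + 5/6; 27·x·(1−x)²/(1+3x)³) = (1+3x)^{3a} · ₂F₁(3a, 3a + 1/2; 2a + 5/6; x). -/
open FormalMultilinearSeries Filter
open scoped Topology ENNReal NNReal

/-- The Gauss hypergeometric series ₂F₁(a,b;c;t) = Σ (a)ₙ(b)ₙ/((c)ₙ n!) tⁿ. -/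
noncomputable def realHyp2F1 (a b c t : ℝ) : ℝ :=
  ∑' n : ℕ, (ascPochhammer ℝ n).eval a * (ascPochhammer ℝ n).eval b /
      ((ascPochhammer ℝ n).eval c * (n.factorial : ℝ)) * t ^ n

namespace GoursatAux

/-- hypergeometric coefficients -/
noncomputable def hk (A B C : ℝ) : ℕ → ℝ := fun n =>
  (ascPochhammer ℝ n).eval A * (ascPochhammer ℝ n).eval B /
      ((ascPochhammer ℝ n).eval C * (n.factorial : ℝ))

/-- shift operation giving derivative coefficients -/
noncomputable def sft (k : ℕ → ℝ) : ℕ → ℝ := fun n => ((n : ℝ) + 1) * k (n + 1)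

noncomputable def pS (k : ℕ → ℝ) : FormalMultilinearSeries ℝ ℝ ℝ :=
  FormalMultilinearSeries.ofScalars ℝ k

noncomputable def fS (k : ℕ → ℝ) : ℝ → ℝ := (pS k).sum

lemma pS_apply (k : ℕ → ℝ) (n : ℕ) (t : ℝ) : (pS k n) (fun _ => t) = k n * t ^ n := by
  rw [pS, FormalMultilinearSeries.ofScalars_apply_eq, smul_eq_mul]

lemma pS_norm (k : ℕ → ℝ) (n : ℕ) : ‖pS k n‖ = |k n| := by
  rw [pS, FormalMultilinearSeries.ofScalars_norm, Real.norm_eq_abs]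

lemma pS_coeff (k : ℕ → ℝ) (n : ℕ) : (pS k).coeff n = k n := by
  show (pS k n) 1 = k n
  have : (1 : Fin n → ℝ) = fun _ => (1:ℝ) := rfl
  rw [this, pS_apply]; simp

lemma fS_zero (k : ℕ → ℝ) : fS k 0 = k 0 := by
  have := FormalMultilinearSeries.ofScalarsSum_zero (E := ℝ) (c := k)
  simpa [FormalMultilinearSeries.ofScalarsSum, fS, pS] using this

lemma mem_ball_of_lt {t : ℝ} {r : ℝ≥0∞} (h : (‖t‖₊ : ℝ≥0∞) < r) :
    t ∈ EMetric.ball (0 : ℝ) r := by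
  show edist t 0 < r
  rw [edist_zero_right, enorm_eq_nnnorm]; exact h

lemma radius_pos_of_lt {t : ℝ} {r : ℝ≥0∞} (h : (‖t‖₊ : ℝ≥0∞) < r) : 0 < r :=
  lt_of_le_of_lt (zero_le) h

lemma hasSum_fS (k : ℕ → ℝ) {t : ℝ} (h : (‖t‖₊ : ℝ≥0∞) < (pS k).radius) :
    HasSum (fun n => k n * t ^ n) (fS k t) := by
  have hb := (pS k).hasFPowerSeriesOnBall (radius_pos_of_lt h)
  have h2 := hb.hasSum (y := t) (mem_ball_of_lt h)
  rw [zero_add] at h2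
  have h3 : (fun n => (pS k n) fun _ => t) = fun n => k n * t ^ n := by
    funext n; rw [pS_apply]
  rw [h3] at h2
  exact h2

/-- the sum function of a scalar series is the tsum -/
lemma fS_eq (k : ℕ → ℝ) (t : ℝ) : fS k t = ∑' n, k n * t ^ n := by
  rw [fS, FormalMultilinearSeries.sum]
  exact tsum_congr fun n => pS_apply k n t

lemma radius_le_sft (k : ℕ → ℝ) : (pS k).radius ≤ (pS (sft k)).radius := by
  refine le_trans (pS k).radius_le_radius_derivSeries ?_
  refine ENNReal.le_of_forall_nnreal_lt (fun r hr => ?_)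
  obtain ⟨C, hC0, hC⟩ := (pS k).derivSeries.norm_mul_pow_le_of_lt_radius hr
  refine (pS (sft k)).le_radius_of_bound C (fun n => ?_)
  refine le_trans (mul_le_mul_of_nonneg_right ?_ (by positivity)) (hC n)
  -- ‖pS (sft k) n‖ ≤ ‖derivSeries n‖
  rw [pS_norm]
  have h1 : ((pS k).derivSeries n (fun _ => (1:ℝ))) 1 = sft k n := by
    rw [FormalMultilinearSeries.derivSeries_apply_diag, pS_apply]
    simp [sft, mul_comm]
  calc |sft k n| = ‖((pS k).derivSeries n (fun _ => (1:ℝ))) 1‖ := by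
        rw [h1, Real.norm_eq_abs]
    _ ≤ ‖(pS k).derivSeries n (fun _ => (1:ℝ))‖ := by
        simpa using ((pS k).derivSeries n (fun _ => (1:ℝ))).le_opNorm 1
    _ ≤ ‖(pS k).derivSeries n‖ := by
        simpa using ((pS k).derivSeries n).le_opNorm (fun _ => (1:ℝ))

lemma evalHasSum (f : ℕ → (ℝ →L[ℝ] ℝ)) (S : ℝ →L[ℝ] ℝ) (t : ℝ) (h : HasSum f S) :
    HasSum (fun n => f n t) (S t) :=
  (ContinuousLinearMap.apply ℝ ℝ t).hasSum h

set_option maxHeartbeats 1000000 in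
/-- derivative of a scalar power series within its radius -/
lemma hasDerivAt_fS (k : ℕ → ℝ) {t : ℝ} (h : (‖t‖₊ : ℝ≥0∞) < (pS k).radius) :
    HasDerivAt (fS k) (fS (sft k) t) t := by
  have hb := (pS k).hasFPowerSeriesOnBall (radius_pos_of_lt h)
  rcases eq_or_ne t 0 with rfl | ht
  · have hd := hb.hasFPowerSeriesAt.hasDerivAt
    have : (pS k 1) (fun _ => (1:ℝ)) = sft k 0 := by
      rw [pS_apply]; simp [sft]
    rw [this] at hd
    rw [fS_zero]; exact hd
  · have han : AnalyticAt ℝ (fS k) t := hb.analyticAt_of_mem (mem_ball_of_lt h)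
    have hfd : HasFDerivAt (fS k) (fderiv ℝ (fS k) t) t :=
      han.differentiableAt.hasFDerivAt
    have hDsum := (hb.fderiv.hasSum (y := t) (mem_ball_of_lt h))
    rw [zero_add] at hDsum
    -- apply at t
    have happ : HasSum (fun n => ((pS k).derivSeries n (fun _ => t)) t)
        ((fderiv ℝ (fS k) t) t) :=
      evalHasSum _ _ t hDsum
    have heq : (fun n => ((pS k).derivSeries n (fun _ => t)) t)
        = fun n => (sft k n * t ^ n) * t := by
      funext n
      rw [FormalMultilinearSeries.derivSeries_apply_diag, pS_apply]
      simp only [nsmul_eq_mul, sft]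
      push_cast
      ring
    rw [heq] at happ
    have happ2 : HasSum (fun n => sft k n * t ^ n) ((fderiv ℝ (fS k) t) t * t⁻¹) := by
      have := happ.mul_right t⁻¹
      simpa [mul_assoc, mul_inv_cancel₀ ht] using this
    have hval : fS (sft k) t = (fderiv ℝ (fS k) t) t * t⁻¹ := by
      have hs2 := hasSum_fS (sft k) (lt_of_lt_of_le h (radius_le_sft k))
      exact hs2.unique happ2
    have hd := hfd.hasDerivAt
    have : (fderiv ℝ (fS k) t) 1 = fS (sft k) t := by
      have hlin : (fderiv ℝ (fS k) t) t = t * (fderiv ℝ (fS k) t) 1 := by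
        have : t = t • (1:ℝ) := by simp
        conv_lhs => rw [this]
        rw [map_smul]; simp [smul_eq_mul]
      rw [hval, hlin]
      field_simp
    rwa [this] at hd


lemma poch_pos {x : ℝ} (hx : 0 < x) (n : ℕ) : 0 < (ascPochhammer ℝ n).eval x := by
  induction n with
  | zero => simp
  | succ m ih =>
    rw [ascPochhammer_succ_eval]
    exact mul_pos ih (by positivity)

lemma hk_zero (A B C : ℝ) : hk A B C 0 = 1 := by simp [hk]

lemma hk_pos {A B C : ℝ} (hA : 0 < A) (hB : 0 < B) (hC : 0 < C) (n : ℕ) :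
    0 < hk A B C n := by
  have := poch_pos hA n; have := poch_pos hB n; have := poch_pos hC n
  have : (0:ℝ) < n.factorial := by positivity
  unfold hk; positivity

lemma hk_rec {C : ℝ} (hC : 0 < C) (A B : ℝ) (n : ℕ) :
    ((n:ℝ)+1) * ((n:ℝ)+C) * hk A B C (n+1) = ((n:ℝ)+A) * ((n:ℝ)+B) * hk A B C n := by
  have hCp := poch_pos hC n
  have hfp : (0:ℝ) < n.factorial := by positivity
  unfold hk
  rw [ascPochhammer_succ_eval, ascPochhammer_succ_eval, ascPochhammer_succ_eval,
    Nat.factorial_succ]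
  push_cast
  field_simp
  ring

lemma tendsto_ratio_aux {c : ℝ} (hc : 0 < c) :
    Tendsto (fun n : ℕ => ((n:ℝ) + c) / ((n:ℝ) + 1)) atTop (𝓝 1) := by
  have h1 : Tendsto (fun n : ℕ => 1 + (c - 1) / ((n:ℝ) + 1)) atTop (𝓝 1) := by
    have h2 : Tendsto (fun n : ℕ => (c - 1) / ((n:ℝ) + 1)) atTop (𝓝 0) := by
      apply Tendsto.div_atTop tendsto_const_nhds
      exact tendsto_atTop_add_const_right atTop 1 tendsto_natCast_atTop_atTop
    simpa using tendsto_const_nhds.add h2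
  refine h1.congr (fun n => ?_)
  have hn : ((n:ℝ) + 1) ≠ 0 := by positivity
  field_simp
  ring

lemma tendsto_ratio {c d : ℝ} (hc : 0 < c) (hd : 0 < d) :
    Tendsto (fun n : ℕ => ((n:ℝ) + c) / ((n:ℝ) + d)) atTop (𝓝 1) := by
  have := (tendsto_ratio_aux hc).div (tendsto_ratio_aux hd) one_ne_zero
  rw [div_one] at this
  refine this.congr (fun n => ?_)
  have h1 : ((n:ℝ) + 1) ≠ 0 := by positivity
  have h2 : ((n:ℝ) + d) ≠ 0 := by positivity
  rw [Pi.div_apply]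
  field_simp

lemma radius_hk {A B C : ℝ} (hA : 0 < A) (hB : 0 < B) (hC : 0 < C) :
    1 ≤ (FormalMultilinearSeries.ofScalars ℝ (hk A B C)).radius := by
  have h := FormalMultilinearSeries.inv_le_ofScalars_radius_of_tendsto (𝕜 := ℝ) ℝ
      (hk A B C) (r := 1) one_ne_zero ?_
  · simpa using h
  · have hr : (fun n : ℕ => ‖hk A B C n.succ‖ / ‖hk A B C n‖)
        = fun n : ℕ => (((n:ℝ) + A) / ((n:ℝ) + 1)) * (((n:ℝ) + B) / ((n:ℝ) + C)) := by
      funext n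
      have hp := hk_pos hA hB hC n
      have hps := hk_pos hA hB hC (n+1)
      rw [Real.norm_eq_abs, Real.norm_eq_abs, abs_of_pos hps, abs_of_pos hp]
      have hrec := hk_rec hC A B n
      have h1 : ((n:ℝ)+1) ≠ 0 := by positivity
      have h2 : ((n:ℝ)+C) ≠ 0 := by positivity
      have h3 : hk A B C n ≠ 0 := ne_of_gt hp
      field_simp
      nlinarith [hrec]
    rw [hr]
    have := (tendsto_ratio hA one_pos).mul (tendsto_ratio hB hC)
    simpa using this


section ODE
variable (A B C : ℝ) (k : ℕ → ℝ)

lemma ode_hasSum {t : ℝ} (h : (‖t‖₊ : ℝ≥0∞) < (pS k).radius) :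
    HasSum (fun n : ℕ => (((n:ℝ)+1)*((n:ℝ)+C)*k (n+1) - ((n:ℝ)+A)*((n:ℝ)+B)*k n) * t ^ n)
      (t*(1-t) * fS (sft (sft k)) t + (C - (A+B+1)*t) * fS (sft k) t - A*B*fS k t) := by
  have h1r : (‖t‖₊ : ℝ≥0∞) < (pS (sft k)).radius := lt_of_lt_of_le h (radius_le_sft k)
  have h2r : (‖t‖₊ : ℝ≥0∞) < (pS (sft (sft k))).radius :=
    lt_of_lt_of_le h1r (radius_le_sft (sft k))
  have h0 := hasSum_fS k h
  have h1 := hasSum_fS (sft k) h1r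
  have h2 := hasSum_fS (sft (sft k)) h2r
  -- tS₂ piece : HasSum (fun n : ℕ => n * sft k n * t^n) (fS (sft (sft k)) t * t)
  have haN : HasSum (fun n : ℕ => (n:ℝ) * sft k n * t ^ n) (fS (sft (sft k)) t * t) := by
    have hm := h2.mul_right t
    have hf : (fun n : ℕ => sft (sft k) n * t ^ n * t)
        = fun n : ℕ => (fun m : ℕ => (m:ℝ) * sft k m * t ^ m) (n + 1) := by
      funext n; simp only [sft]; push_cast; ring
    rw [hf] at hm
    have := (hasSum_nat_add_iff (f := fun m : ℕ => (m:ℝ) * sft k m * t ^ m) 1).mp hm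
    simpa using this
  -- t² S₂ piece : HasSum (fun n : ℕ => n(n-1) k n t^n) (fS (sft (sft k)) t * (t*t))
  have hb2 : HasSum (fun n : ℕ => (n:ℝ) * ((n:ℝ) - 1) * k n * t ^ n)
      (fS (sft (sft k)) t * (t*t)) := by
    have hm := h2.mul_right (t*t)
    have hf : (fun n : ℕ => sft (sft k) n * t ^ n * (t*t))
        = fun n : ℕ => (fun m : ℕ => (m:ℝ) * ((m:ℝ) - 1) * k m * t ^ m) (n + 2) := by
      funext n; simp only [sft]; push_cast; ring
    rw [hf] at hm
    have := (hasSum_nat_add_iff (f := fun m : ℕ => (m:ℝ) * ((m:ℝ) - 1) * k m * t ^ m) 2).mp hm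
    simpa [Finset.sum_range_succ] using this
  -- t S₁ piece : HasSum (fun n : ℕ => n * k n * t^n) (fS (sft k) t * t)
  have hb1 : HasSum (fun n : ℕ => (n:ℝ) * k n * t ^ n) (fS (sft k) t * t) := by
    have hm := h1.mul_right t
    have hf : (fun n : ℕ => sft k n * t ^ n * t)
        = fun n : ℕ => (fun m : ℕ => (m:ℝ) * k m * t ^ m) (n + 1) := by
      funext n; simp only [sft]; push_cast; ring
    rw [hf] at hm
    have := (hasSum_nat_add_iff (f := fun m : ℕ => (m:ℝ) * k m * t ^ m) 1).mp hm
    simpa using this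
  -- combine
  have hC1 := h1.mul_left C
  have hA0 := h0.mul_left (A*B)
  have hB1 := hb1.mul_left (A+B+1)
  have htot := ((haN.add hC1).sub ((hb2.add hB1).add hA0))
  have hfun : (fun n : ℕ => ((n:ℝ) * sft k n * t ^ n + C * (sft k n * t ^ n)) -
      (((n:ℝ) * ((n:ℝ) - 1) * k n * t ^ n + (A+B+1) * ((n:ℝ) * k n * t ^ n))
        + A*B * (k n * t ^ n)))
      = fun n : ℕ => (((n:ℝ)+1)*((n:ℝ)+C)*k (n+1) - ((n:ℝ)+A)*((n:ℝ)+B)*k n) * t ^ n := by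
    funext n; simp only [sft]; push_cast; ring
  rw [hfun] at htot
  convert htot using 1
  · rfl
  ring

lemma hyp_ode {A B C : ℝ} (hC : 0 < C) {t : ℝ}
    (h : (‖t‖₊ : ℝ≥0∞) < (pS (hk A B C)).radius) :
    t*(1-t) * fS (sft (sft (hk A B C))) t + (C - (A+B+1)*t) * fS (sft (hk A B C)) t
      - A*B*fS (hk A B C) t = 0 := by
  have := ode_hasSum A B C (hk A B C) h
  have hz : (fun n : ℕ => (((n:ℝ)+1)*((n:ℝ)+C)*hk A B C (n+1)
      - ((n:ℝ)+A)*((n:ℝ)+B)*hk A B C n) * t ^ n) = fun _ => (0:ℝ) := by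
    funext n
    rw [hk_rec hC A B n]
    ring
  rw [hz] at this
  exact this.unique hasSum_zero

end ODE

section Extraction

lemma radius_le_coeff (q : FormalMultilinearSeries ℝ ℝ ℝ) :
    q.radius ≤ (pS q.coeff).radius := by
  refine ENNReal.le_of_forall_nnreal_lt (fun r hr => ?_)
  obtain ⟨Cb, hC0, hC⟩ := q.norm_mul_pow_le_of_lt_radius hr
  refine (pS q.coeff).le_radius_of_bound Cb (fun n => ?_)
  refine le_trans (mul_le_mul_of_nonneg_right ?_ (by positivity)) (hC n)
  rw [pS_norm]
  calc |q.coeff n| = ‖q n (fun _ => (1:ℝ))‖ := by rw [← Real.norm_eq_abs]; rfl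
    _ ≤ ‖q n‖ := by simpa using (q n).le_opNorm (fun _ => (1:ℝ))

lemma coeffs_eq_zero {d : ℕ → ℝ} {ε : ℝ} (hε : 0 < ε)
    (h : ∀ y : ℝ, |y| < ε → HasSum (fun n : ℕ => d n * y ^ n) 0) : ∀ n, d n = 0 := by
  -- radius positivity
  have ht : |ε/2| < ε := by rw [abs_of_pos (by positivity)]; linarith
  have hsum := h (ε/2) ht
  have htend : Tendsto (fun n : ℕ => ‖pS d n‖ * ‖ε/2‖₊ ^ n) atTop (𝓝 0) := by
    have h0 := hsum.summable.tendsto_atTop_zero.norm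
    rw [norm_zero] at h0
    refine h0.congr (fun n => ?_)
    rw [pS_norm, norm_mul, norm_pow, coe_nnnorm, Real.norm_eq_abs, Real.norm_eq_abs]
  have hrad : ((‖ε/2‖₊ : ℝ≥0) : ℝ≥0∞) ≤ (pS d).radius :=
    (pS d).le_radius_of_tendsto htend
  have hradpos : 0 < (pS d).radius := by
    refine lt_of_lt_of_le ?_ hrad
    have : (0:ℝ) < |ε/2| := by positivity
    simpa [pos_iff_ne_zero, nnnorm_eq_zero] using (by positivity : ε/2 ≠ 0)
  set ρ := min (ENNReal.ofReal ε) (pS d).radius with hρ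
  have hball : HasFPowerSeriesOnBall (fun _ : ℝ => (0:ℝ)) (pS d) 0 ρ := by
    refine ⟨min_le_right _ _, lt_min (by simpa using hε) hradpos, fun {y} hy => ?_⟩
    have hy' : |y| < ε := by
      rw [EMetric.mem_ball, edist_zero_right, enorm_eq_nnnorm] at hy
      have hylt : (‖y‖₊ : ℝ≥0∞) < ENNReal.ofReal ε := hy.trans_le (min_le_left _ _)
      have h2 : ‖y‖₊ < ε.toNNReal := by
        rw [ENNReal.ofReal] at hylt; exact_mod_cast hylt
      have h3 : (‖y‖₊ : ℝ) < ε := by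
        have := NNReal.coe_lt_coe.mpr h2
        rwa [Real.coe_toNNReal _ hε.le] at this
      simpa [coe_nnnorm, Real.norm_eq_abs] using h3
    have hfun : (fun n : ℕ => (pS d n) fun _ => y) = fun n : ℕ => d n * y ^ n := by
      funext n; exact pS_apply d n y
    rw [hfun]
    simpa using h y hy'
  have heq := hball.hasFPowerSeriesAt.eq_formalMultilinearSeries
      (hasFPowerSeriesAt_const (c := (0:ℝ)) (e := (0:ℝ)))
  intro n
  have : (pS d n) (fun _ => (1:ℝ)) = d n := by rw [pS_apply]; simp
  rw [← this, heq]
  rcases Nat.eq_zero_or_pos n with rfl | hn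
  · simp [constFormalMultilinearSeries]
  · rw [constFormalMultilinearSeries_apply_of_nonzero (Nat.pos_iff_ne_zero.mp hn)]
    simp

end Extraction

section RLog

lemma analyticAt_rlog {x : ℝ} (hx : 0 < x) : AnalyticAt ℝ Real.log x := by
  have h1 : AnalyticAt ℂ Complex.log (x:ℂ) := by
    apply analyticAt_clog
    rw [Complex.mem_slitPlane_iff]
    left; simpa using hx
  have h2 : AnalyticAt ℝ Complex.log ((x:ℝ):ℂ) := h1.restrictScalars
  have h3 : AnalyticAt ℝ (fun y : ℝ => Complex.log (y:ℂ)) x :=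
    h2.comp (Complex.ofRealCLM.analyticAt x)
  have h4 : AnalyticAt ℝ (fun y : ℝ => (Complex.log (y:ℂ)).re) x :=
    (Complex.reCLM.analyticAt _).comp h3
  have he : (fun y : ℝ => (Complex.log (y:ℂ)).re) = Real.log :=
    funext fun y => Complex.log_ofReal_re y
  rwa [he] at h4

lemma analyticAt_affine_rpow (c : ℝ) {x : ℝ} (hx : 0 < 1 + 3*x) :
    AnalyticAt ℝ (fun y : ℝ => (1 + 3*y) ^ c) x := by
  have haff : AnalyticAt ℝ (fun y : ℝ => 1 + 3*y) x :=
    analyticAt_const.add (analyticAt_const.mul analyticAt_id)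
  have hlog : AnalyticAt ℝ (fun y : ℝ => Real.log (1 + 3*y)) x :=
    AnalyticAt.comp (f := fun y : ℝ => 1 + 3*y) (g := Real.log) (analyticAt_rlog hx) haff
  have hexp : AnalyticAt ℝ (fun y : ℝ => Real.exp (Real.log (1 + 3*y) * c)) x :=
    (hlog.mul analyticAt_const).rexp
  refine hexp.congr ?_
  have hopen : IsOpen {y : ℝ | 0 < 1 + 3*y} :=
    isOpen_lt continuous_const (by continuity)
  filter_upwards [hopen.mem_nhds hx] with y hy
  rw [Real.rpow_def_of_pos hy]

end RLog

section Phi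

noncomputable def phi : ℝ → ℝ := fun x => 27*x*(1-x)^2/(1+3*x)^3
noncomputable def dphi : ℝ → ℝ := fun x => 27*(1-x)*(1-9*x)/(1+3*x)^4
noncomputable def d2phi : ℝ → ℝ :=
  fun x => 27*((18*x-10)*(1+3*x) - 12*(1-x)*(1-9*x))/(1+3*x)^5

def U : Set ℝ := Set.Ioo (-(1/100) : ℝ) (1/9)

lemma U_open : IsOpen U := isOpen_Ioo
lemma U_conn : IsPreconnected U := isPreconnected_Ioo
lemma zero_mem_U : (0:ℝ) ∈ U := by constructor <;> norm_num

lemma s_pos {x : ℝ} (hx : x ∈ U) : 0 < 1 + 3*x := by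
  rcases hx with ⟨h1, h2⟩; linarith

lemma phi_abs_lt {x : ℝ} (hx : x ∈ U) : |phi x| < 1 := by
  obtain ⟨h1, h2⟩ := hx
  have hs : (0:ℝ) < 1 + 3*x := by linarith
  have hs3 : (0:ℝ) < (1+3*x)^3 := by positivity
  rw [phi, abs_lt]
  constructor
  · rw [lt_div_iff₀ hs3]
    nlinarith [sq_nonneg x, sq_nonneg (1-x), sq_nonneg (1+3*x)]
  · rw [div_lt_iff₀ hs3]
    nlinarith [sq_nonneg (1-9*x)]

lemma phi_zero : phi 0 = 0 := by norm_num [phi]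

lemma hasDerivAt_phi {x : ℝ} (hs : 0 < 1 + 3*x) : HasDerivAt phi (dphi x) x := by
  have hnum : HasDerivAt (fun y : ℝ => 27*y*(1-y)^2)
      (27*(1-x)^2 + 27*x*(2*(1-x)^1*(0-1))) x := by
    have h1 : HasDerivAt (fun y : ℝ => 27*y) 27 x := by
      simpa using (hasDerivAt_id x).const_mul (27:ℝ)
    have h2 : HasDerivAt (fun y : ℝ => (1-y)^2) (2*(1-x)^1*(0-1)) x :=
      ((hasDerivAt_const x (1:ℝ)).sub (hasDerivAt_id x)).pow 2
    exact h1.mul h2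
  have hden : HasDerivAt (fun y : ℝ => (1+3*y)^3) (3*(1+3*x)^2*(0+3)) x := by
    have h3 : HasDerivAt (fun y : ℝ => 1+3*y) (0+3) x := by
      have := ((hasDerivAt_id x).const_mul (3:ℝ))
      exact ((hasDerivAt_const x (1:ℝ)).add ((hasDerivAt_id x).const_mul (3:ℝ))).congr_deriv (by ring)
    exact (h3.pow 3).congr_deriv (by norm_num)
  have hden0 : (1+3*x)^3 ≠ 0 := by positivity
  have h := hnum.div hden hden0
  refine h.congr_deriv ?_
  rw [dphi]
  field_simp
  ring

lemma hasDerivAt_dphi {x : ℝ} (hs : 0 < 1 + 3*x) : HasDerivAt dphi (d2phi x) x := by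
  have hnum : HasDerivAt (fun y : ℝ => 27*(1-y)*(1-9*y))
      ((27*(0-1))*(1-9*x) + 27*(1-x)*(0-9)) x := by
    have h1 : HasDerivAt (fun y : ℝ => 27*(1-y)) (27*(0-1)) x :=
      ((hasDerivAt_const x (1:ℝ)).sub (hasDerivAt_id x)).const_mul 27
    have h2 : HasDerivAt (fun y : ℝ => 1-9*y) (0-9) x := by
      exact ((hasDerivAt_const x (1:ℝ)).sub ((hasDerivAt_id x).const_mul (9:ℝ))).congr_deriv (by ring)
    exact h1.mul h2
  have hden : HasDerivAt (fun y : ℝ => (1+3*y)^4) (4*(1+3*x)^3*(0+3)) x := by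
    have h3 : HasDerivAt (fun y : ℝ => 1+3*y) (0+3) x := by
      exact ((hasDerivAt_const x (1:ℝ)).add ((hasDerivAt_id x).const_mul (3:ℝ))).congr_deriv (by ring)
    exact (h3.pow 4).congr_deriv (by norm_num)
  have hden0 : (1+3*x)^4 ≠ 0 := by positivity
  have h := hnum.div hden hden0
  refine h.congr_deriv ?_
  rw [d2phi]
  field_simp
  ring

lemma hasDerivAt_rpow_affine {x c : ℝ} (hs : 0 < 1 + 3*x) :
    HasDerivAt (fun y : ℝ => (1+3*y) ^ c) (c * (1+3*x) ^ (c-1) * 3) x := by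
  have hr : HasDerivAt (fun y : ℝ => y ^ c) (c * (1+3*x) ^ (c-1)) (1+3*x) :=
    Real.hasDerivAt_rpow_const (Or.inl (ne_of_gt hs))
  have haff : HasDerivAt (fun y : ℝ => 1+3*y) 3 x := by
    exact ((hasDerivAt_const x (1:ℝ)).add ((hasDerivAt_id x).const_mul (3:ℝ))).congr_deriv (by ring)
  exact hr.comp x haff

lemma rpow_sub_one {s c : ℝ} (hs : 0 < s) : s ^ (c - 1) = s ^ c / s := by
  rw [Real.rpow_sub hs, Real.rpow_one]

end Phi

section W

variable (a : ℝ)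

noncomputable def w : ℝ → ℝ :=
  fun x => (1+3*x) ^ (-3*a) * fS (hk a (a+1/3) (2*a+5/6)) (phi x)

noncomputable def w1 : ℝ → ℝ :=
  fun x => (-3*a) * (1+3*x) ^ (-3*a-1) * 3 * fS (hk a (a+1/3) (2*a+5/6)) (phi x)
    + (1+3*x) ^ (-3*a) * (fS (sft (hk a (a+1/3) (2*a+5/6))) (phi x) * dphi x)

noncomputable def w2 : ℝ → ℝ :=
  fun x => 27*a*(3*a+1) * (1+3*x) ^ (-3*a) / (1+3*x)^2 * fS (hk a (a+1/3) (2*a+5/6)) (phi x)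
    + (-18*a) * (1+3*x) ^ (-3*a) / (1+3*x) * (fS (sft (hk a (a+1/3) (2*a+5/6))) (phi x) * dphi x)
    + (1+3*x) ^ (-3*a) *
        (fS (sft (sft (hk a (a+1/3) (2*a+5/6)))) (phi x) * dphi x * dphi x
          + fS (sft (hk a (a+1/3) (2*a+5/6))) (phi x) * d2phi x)

variable {a}

lemma memK1 (ha : 0 < a) {t : ℝ} (ht : |t| < 1) :
    (‖t‖₊ : ℝ≥0∞) < (pS (hk a (a+1/3) (2*a+5/6))).radius := by
  have h1 : ‖t‖₊ < 1 := by
    rw [← NNReal.coe_lt_coe]; simpa [coe_nnnorm, Real.norm_eq_abs] using ht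
  refine lt_of_lt_of_le ?_ (radius_hk ha (by linarith) (by linarith))
  exact_mod_cast h1

lemma memK2 (ha : 0 < a) {t : ℝ} (ht : |t| < 1) :
    (‖t‖₊ : ℝ≥0∞) < (pS (hk (3*a) (3*a+1/2) (2*a+5/6))).radius := by
  have h1 : ‖t‖₊ < 1 := by
    rw [← NNReal.coe_lt_coe]; simpa [coe_nnnorm, Real.norm_eq_abs] using ht
  refine lt_of_lt_of_le ?_ (radius_hk (by linarith) (by linarith) (by linarith))
  exact_mod_cast h1

lemma hasDerivAt_u0 (ha : 0 < a) {x : ℝ} (hx : x ∈ U) :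
    HasDerivAt (fun y => fS (hk a (a+1/3) (2*a+5/6)) (phi y))
      (fS (sft (hk a (a+1/3) (2*a+5/6))) (phi x) * dphi x) x :=
  (hasDerivAt_fS _ (memK1 ha (phi_abs_lt hx))).comp x (hasDerivAt_phi (s_pos hx))

lemma hasDerivAt_u1 (ha : 0 < a) {x : ℝ} (hx : x ∈ U) :
    HasDerivAt (fun y => fS (sft (hk a (a+1/3) (2*a+5/6))) (phi y))
      (fS (sft (sft (hk a (a+1/3) (2*a+5/6)))) (phi x) * dphi x) x :=
  (hasDerivAt_fS _ (lt_of_lt_of_le (memK1 ha (phi_abs_lt hx)) (radius_le_sft _))).comp x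
    (hasDerivAt_phi (s_pos hx))

lemma hasDerivAt_w (ha : 0 < a) {x : ℝ} (hx : x ∈ U) :
    HasDerivAt (w a) (w1 a x) x := by
  have hG := hasDerivAt_rpow_affine (c := -3*a) (s_pos hx)
  have h := hG.mul (hasDerivAt_u0 ha hx)
  have he : -3*a - 1 = -3*a-1 := rfl
  rw [he] at h
  exact h

lemma hasDerivAt_w1 (ha : 0 < a) {x : ℝ} (hx : x ∈ U) :
    HasDerivAt (w1 a) (w2 a x) x := by
  have hs := s_pos hx
  have hc1 : HasDerivAt (fun y : ℝ => (-3*a) * (1+3*y) ^ (-3*a-1) * 3)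
      ((-3*a) * ((-3*a-1) * (1+3*x) ^ (-3*a-1-1) * 3) * 3) x :=
    ((hasDerivAt_rpow_affine (c := -3*a-1) hs).const_mul (-3*a)).mul_const 3
  have hG := hasDerivAt_rpow_affine (c := -3*a) hs
  have hprod := (hasDerivAt_u1 ha hx).mul (hasDerivAt_dphi hs)
  have h := (hc1.mul (hasDerivAt_u0 ha hx)).add (hG.mul hprod)
  have hv : ((-3*a) * ((-3*a-1) * (1+3*x) ^ (-3*a-1-1) * 3) * 3)
        * fS (hk a (a+1/3) (2*a+5/6)) (phi x)
      + ((-3*a) * (1+3*x) ^ (-3*a-1) * 3)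
        * (fS (sft (hk a (a+1/3) (2*a+5/6))) (phi x) * dphi x)
      + (((-3*a) * (1+3*x) ^ (-3*a - 1) * 3)
          * (fS (sft (hk a (a+1/3) (2*a+5/6))) (phi x) * dphi x)
        + (1+3*x) ^ (-3*a) *
            (fS (sft (sft (hk a (a+1/3) (2*a+5/6)))) (phi x) * dphi x * dphi x
              + fS (sft (hk a (a+1/3) (2*a+5/6))) (phi x) * d2phi x))
      = w2 a x := by
    have h1 : (1+3*x) ^ (-3*a-1) = (1+3*x) ^ (-3*a) / (1+3*x) :=
      rpow_sub_one hs
    have h2 : (1+3*x) ^ (-3*a-1-1) = (1+3*x) ^ (-3*a) / (1+3*x) / (1+3*x) := by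
      rw [rpow_sub_one hs, h1]
    rw [w2, h1, h2]
    have hs0 : (1+3*x) ≠ 0 := ne_of_gt hs
    field_simp
    ring
  rw [show (-3*a-1 : ℝ) = -3*a - 1 from rfl] at hv
  refine h.congr_deriv ?_
  rw [← hv]; rfl

set_option maxHeartbeats 2000000 in
lemma w_ode (ha : 0 < a) {x : ℝ} (hx : x ∈ U) :
    x*(1-x) * w2 a x + ((2*a+5/6) - ((3*a)+(3*a+1/2)+1)*x) * w1 a x
      - (3*a)*(3*a+1/2) * w a x = 0 := by
  have hs := s_pos hx
  have hs0 : (1+3*x) ≠ 0 := ne_of_gt hs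
  have hCpos : (0:ℝ) < 2*a+5/6 := by linarith
  have hcombo := hyp_ode (A := a) (B := a+1/3) hCpos (memK1 ha (phi_abs_lt hx))
  set u0 := fS (hk a (a+1/3) (2*a+5/6)) (phi x) with hu0
  set u1 := fS (sft (hk a (a+1/3) (2*a+5/6))) (phi x) with hu1
  set u2 := fS (sft (sft (hk a (a+1/3) (2*a+5/6)))) (phi x) with hu2
  have h1 : (1+3*x) ^ (-3*a-1) = (1+3*x) ^ (-3*a) / (1+3*x) := rpow_sub_one hs
  rw [w, w1, w2, ← hu0, ← hu1, ← hu2, h1]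
  set P := (1+3*x) ^ (-3*a) with hP
  have key : x*(1-x) * (27*a*(3*a+1) * P / (1+3*x)^2 * u0
        + (-18*a) * P / (1+3*x) * (u1 * dphi x)
        + P * (u2 * dphi x * dphi x + u1 * d2phi x))
      + ((2*a+5/6) - ((3*a)+(3*a+1/2)+1)*x) * ((-3*a) * (P / (1+3*x)) * 3 * u0
        + P * (u1 * dphi x))
      - (3*a)*(3*a+1/2) * (P * u0)
      = (27*(1-x)/(1+3*x)^2) * P *
        (phi x * (1 - phi x) * u2 + ((2*a+5/6) - (a+(a+1/3)+1)*phi x) * u1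
          - a*(a+1/3)*u0) := by
    rw [phi, dphi, d2phi]
    have hs1 : (1 + x*3) ≠ 0 := ne_of_gt (by linarith)
    field_simp
    ring
  rw [key, hcombo, mul_zero]

lemma analyticAt_fS {k : ℕ → ℝ} {t : ℝ} (h : (‖t‖₊ : ℝ≥0∞) < (pS k).radius) :
    AnalyticAt ℝ (fS k) t :=
  ((pS k).hasFPowerSeriesOnBall (radius_pos_of_lt h)).analyticAt_of_mem (mem_ball_of_lt h)

lemma analyticAt_phi {x : ℝ} (hs : 0 < 1 + 3*x) : AnalyticAt ℝ phi x := by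
  have hnum : AnalyticAt ℝ (fun y : ℝ => 27*y*(1-y)^2) x :=
    (analyticAt_const.mul analyticAt_id).mul ((analyticAt_const.sub analyticAt_id).pow 2)
  have hden : AnalyticAt ℝ (fun y : ℝ => (1+3*y)^3) x :=
    (analyticAt_const.add (analyticAt_const.mul analyticAt_id)).pow 3
  exact hnum.div hden (by positivity)

lemma analyticOnNhd_w (ha : 0 < a) : AnalyticOnNhd ℝ (w a) U := by
  intro x hx
  have hs := s_pos hx
  have hG : AnalyticAt ℝ (fun y : ℝ => (1+3*y) ^ (-3*a)) x := analyticAt_affine_rpow _ hs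
  have hcomp : AnalyticAt ℝ (fun y => fS (hk a (a+1/3) (2*a+5/6)) (phi y)) x :=
    (analyticAt_fS (memK1 ha (phi_abs_lt hx))).comp (analyticAt_phi hs)
  exact hG.mul hcomp

lemma analyticOnNhd_v (ha : 0 < a) : AnalyticOnNhd ℝ (fS (hk (3*a) (3*a+1/2) (2*a+5/6))) U := by
  intro x hx
  obtain ⟨h1, h2⟩ := hx
  have : |x| < 1 := by rw [abs_lt]; constructor <;> linarith
  exact analyticAt_fS (memK2 ha this)

lemma w_zero (ha : 0 < a) : w a 0 = 1 := by
  rw [w, phi_zero, fS_zero, hk_zero]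
  norm_num

set_option maxHeartbeats 1000000 in
lemma loc_eq (ha : 0 < a) :
    ∃ ε > 0, ∀ y : ℝ, |y| < ε → w a y = fS (hk (3*a) (3*a+1/2) (2*a+5/6)) y := by
  obtain ⟨q, r, hball⟩ : ∃ q r, HasFPowerSeriesOnBall (w a) q 0 r := by
    obtain ⟨q, hq⟩ := analyticOnNhd_w ha 0 zero_mem_U
    obtain ⟨r, hr⟩ := hq
    exact ⟨q, r, hr⟩
  set qc := q.coeff with hqc
  have hrq : r ≤ (pS qc).radius := le_trans hball.r_le (radius_le_coeff q)
  -- pick δ with ball δ ⊆ U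
  obtain ⟨δ, hδ0, hδU⟩ := Metric.isOpen_iff.mp U_open 0 zero_mem_U
  -- pick nnreal ε' with 0 < ε' < r
  obtain ⟨ε', hε'0, hε'r⟩ := ENNReal.lt_iff_exists_nnreal_btwn.mp hball.r_pos
  set ε := min (ε' : ℝ) δ with hε
  have hεpos : 0 < ε := lt_min (by exact_mod_cast hε'0) hδ0
  have hmem : ∀ y : ℝ, |y| < ε → (‖y‖₊ : ℝ≥0∞) < r := by
    intro y hy
    have h1 : ‖y‖₊ < ε' := by
      rw [← NNReal.coe_lt_coe]
      calc (‖y‖₊ : ℝ) = |y| := by rw [coe_nnnorm, Real.norm_eq_abs]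
        _ < ε := hy
        _ ≤ ε' := min_le_left _ _
    exact lt_of_lt_of_le (by exact_mod_cast h1) (le_of_lt hε'r)
  have hmemU : ∀ y : ℝ, |y| < ε → y ∈ U := by
    intro y hy
    apply hδU
    rw [Metric.mem_ball, Real.dist_eq, sub_zero]
    exact lt_of_lt_of_le hy (min_le_right _ _)
  have hmemqc : ∀ y : ℝ, |y| < ε → (‖y‖₊ : ℝ≥0∞) < (pS qc).radius :=
    fun y hy => lt_of_lt_of_le (hmem y hy) hrq
  -- w = fS qc on the ball
  have heqw : ∀ y : ℝ, |y| < ε → w a y = fS qc y := by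
    intro y hy
    have hsum := hball.hasSum (y := y) (mem_ball_of_lt (hmem y hy))
    rw [zero_add] at hsum
    have hfun : (fun n : ℕ => (q n) fun _ => y) = fun n : ℕ => qc n * y ^ n := by
      funext n
      rw [FormalMultilinearSeries.apply_eq_pow_smul_coeff, smul_eq_mul, mul_comm]
    rw [hfun] at hsum
    exact hsum.unique (hasSum_fS qc (hmemqc y hy))
  -- eventual equality at each point of the ball
  have hev : ∀ y : ℝ, |y| < ε → (fS qc) =ᶠ[𝓝 y] (w a) := by
    intro y hy
    have hopen : IsOpen {z : ℝ | |z| < ε} := by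
      have : {z : ℝ | |z| < ε} = Metric.ball (0:ℝ) ε := by
        ext z; simp [Metric.mem_ball, Real.dist_eq]
      rw [this]; exact Metric.isOpen_ball
    filter_upwards [hopen.mem_nhds hy] with z hz
    exact (heqw z hz).symm
  -- first derivative identification
  have hd1 : ∀ y : ℝ, |y| < ε → w1 a y = fS (sft qc) y := by
    intro y hy
    have h1 : HasDerivAt (w a) (fS (sft qc) y) y :=
      (hasDerivAt_fS qc (hmemqc y hy)).congr_of_eventuallyEq (hev y hy).symm
    exact (hasDerivAt_w ha (hmemU y hy)).unique h1
  have hev1 : ∀ y : ℝ, |y| < ε → (fS (sft qc)) =ᶠ[𝓝 y] (w1 a) := by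
    intro y hy
    have hopen : IsOpen {z : ℝ | |z| < ε} := by
      have : {z : ℝ | |z| < ε} = Metric.ball (0:ℝ) ε := by
        ext z; simp [Metric.mem_ball, Real.dist_eq]
      rw [this]; exact Metric.isOpen_ball
    filter_upwards [hopen.mem_nhds hy] with z hz
    exact (hd1 z hz).symm
  have hd2 : ∀ y : ℝ, |y| < ε → w2 a y = fS (sft (sft qc)) y := by
    intro y hy
    have hmem1 : (‖y‖₊ : ℝ≥0∞) < (pS (sft qc)).radius :=
      lt_of_lt_of_le (hmemqc y hy) (radius_le_sft qc)
    have h1 : HasDerivAt (w1 a) (fS (sft (sft qc)) y) y :=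
      (hasDerivAt_fS (sft qc) hmem1).congr_of_eventuallyEq (hev1 y hy).symm
    exact (hasDerivAt_w1 ha (hmemU y hy)).unique h1
  -- the combination vanishes, so coefficients satisfy the recurrence
  have hrec : ∀ n : ℕ, ((n:ℝ)+1)*((n:ℝ)+(2*a+5/6))*qc (n+1)
      - ((n:ℝ)+3*a)*((n:ℝ)+(3*a+1/2))*qc n = 0 := by
    apply coeffs_eq_zero hεpos
    intro y hy
    have hsum := ode_hasSum (3*a) (3*a+1/2) (2*a+5/6) qc (hmemqc y hy)
    have hzero : y*(1-y) * fS (sft (sft qc)) y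
        + ((2*a+5/6) - ((3*a)+(3*a+1/2)+1)*y) * fS (sft qc) y
        - (3*a)*(3*a+1/2)*fS qc y = 0 := by
      rw [← hd2 y hy, ← hd1 y hy, ← heqw y hy]
      exact w_ode ha (hmemU y hy)
    rwa [hzero] at hsum
  -- identify coefficients with hypergeometric ones
  have hq0 : qc 0 = 1 := by
    have h0 := hball.hasFPowerSeriesAt.coeff_zero (fun _ => 0)
    rw [w_zero ha] at h0
    have h1 : qc 0 = (q 0) fun _ => (0:ℝ) := by
      rw [hqc, FormalMultilinearSeries.coeff]
      congr 1
      exact Subsingleton.elim _ _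
    rw [h1, h0]
  have hqck : ∀ n, qc n = hk (3*a) (3*a+1/2) (2*a+5/6) n := by
    intro n
    induction n with
    | zero => rw [hq0, hk_zero]
    | succ m ih =>
      have hC : (0:ℝ) < 2*a+5/6 := by linarith
      have h1 : ((m:ℝ)+1)*((m:ℝ)+(2*a+5/6)) ≠ 0 := by positivity
      apply mul_left_cancel₀ h1
      have e1 : ((m:ℝ)+1)*((m:ℝ)+(2*a+5/6))*qc (m+1)
          = ((m:ℝ)+3*a)*((m:ℝ)+(3*a+1/2))*qc m := by linarith [hrec m]
      rw [e1, ih, hk_rec hC]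
  have hfinal : qc = hk (3*a) (3*a+1/2) (2*a+5/6) := funext hqck
  exact ⟨ε, hεpos, fun y hy => by rw [heqw y hy, hfinal]⟩

lemma realHyp_fS (A B C t : ℝ) : realHyp2F1 A B C t = fS (hk A B C) t := by
  rw [fS_eq]; rfl

end W

end GoursatAux

open GoursatAux in
/-- Goursat's cubic transformation (entry (116) of Goursat; Section 11, Example 2). -/
theorem goursat_cubic (a : ℝ) (ha : 0 < a) (x : ℝ) (hx0 : 0 < x) (hx1 : x < 1/9) :
    realHyp2F1 a (a + 1/3) (2 * a + 5/6) (27 * x * (1 - x) ^ 2 / (1 + 3 * x) ^ 3)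
      = (1 + 3 * x) ^ (3 * a) * realHyp2F1 (3 * a) (3 * a + 1/2) (2 * a + 5/6) x := by
  have hxU : x ∈ U := ⟨by linarith, hx1⟩
  have hs : 0 < 1 + 3*x := s_pos hxU
  -- identity theorem on U
  obtain ⟨ε, hε, hloc⟩ := loc_eq ha
  have hfg : w a =ᶠ[nhds 0] fS (hk (3*a) (3*a+1/2) (2*a+5/6)) := by
    filter_upwards [Metric.ball_mem_nhds (0:ℝ) hε] with y hy
    exact hloc y (by simpa [Real.dist_eq] using hy)
  have heq : w a x = fS (hk (3*a) (3*a+1/2) (2*a+5/6)) x :=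
    (analyticOnNhd_w ha).eqOn_of_preconnected_of_eventuallyEq (analyticOnNhd_v ha)
      U_conn zero_mem_U hfg hxU
  have hL : realHyp2F1 a (a + 1/3) (2 * a + 5/6) (27 * x * (1 - x) ^ 2 / (1 + 3 * x) ^ 3)
      = fS (hk a (a + 1/3) (2*a + 5/6)) (phi x) := by
    rw [realHyp_fS]
    rfl
  have hR : realHyp2F1 (3 * a) (3 * a + 1/2) (2 * a + 5/6) x
      = fS (hk (3*a) (3*a+1/2) (2*a+5/6)) x := by
    rw [realHyp_fS]
  have hinv : (1+3*x) ^ (3*a) * (1+3*x) ^ (-3*a) = 1 := by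
    have h0 : (3*a) + (-3*a) = 0 := by ring
    rw [← Real.rpow_add hs, h0, Real.rpow_zero]
  have hw : w a x = (1+3*x) ^ (-3*a) * fS (hk a (a + 1/3) (2*a + 5/6)) (phi x) := rfl
  rw [hL, hR]
  calc fS (hk a (a + 1/3) (2*a + 5/6)) (phi x)
      = ((1+3*x) ^ (3*a) * (1+3*x) ^ (-3*a)) * fS (hk a (a + 1/3) (2*a + 5/6)) (phi x) := by
        rw [hinv, one_mul]
    _ = (1+3*x) ^ (3*a) * ((1+3*x) ^ (-3*a) * fS (hk a (a + 1/3) (2*a + 5/6)) (phi x)) := by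
        ring
    _ = (1 + 3 * x) ^ (3 * a) * fS (hk (3*a) (3*a+1/2) (2*a+5/6)) x := by
        rw [← hw, heq]
end

section
/- For real k with 0 < k < 1, define F(k) := ∫₀¹ ((1−z²)(1−k²z²))^{−1/2} dz (a convergent improper integral). Then F(2√k/(1+k)) = (1+k) · F(k). (Note that 0 < 2√k/(1+k) < 1 since (1+k)² − 4k = (1−k)² > 0.) -/
/-- The complete elliptic integral of the first kind
F(k) = ∫₀¹ dz/√((1−z²)(1−k²z²)). -/
noncomputable def ellipticF (k : ℝ) : ℝ :=
  ∫ z in Set.Ioo (0 : ℝ) 1, 1 / Real.sqrt ((1 - z ^ 2) * (1 - k ^ 2 * z ^ 2))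

/-- Gauss's AGM transformation of the complete elliptic integral of the first kind
(Section 12 of the paper). -/
theorem gauss_AGM_transformation (k : ℝ) (hk0 : 0 < k) (hk1 : k < 1) :
    ellipticF (2 * Real.sqrt k / (1 + k)) = (1 + k) * ellipticF k := by
  set k₁ : ℝ := 2 * Real.sqrt k / (1 + k) with hk₁def
  set φ : ℝ → ℝ := fun t => (1 + k) * t / (1 + k * t ^ 2) with hφdef
  set φ' : ℝ → ℝ := fun t => (1 + k) * (1 - k * t ^ 2) / (1 + k * t ^ 2) ^ 2 with hφ'def
  have hk1' : (0:ℝ) < 1 + k := by linarith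
  have hD : ∀ t : ℝ, 0 < 1 + k * t ^ 2 := fun t => by nlinarith [sq_nonneg t]
  -- derivative
  have hderiv : ∀ t : ℝ, HasDerivAt φ (φ' t) t := by
    intro t
    have h1 : HasDerivAt (fun t : ℝ => (1 + k) * t) (1 + k) t := by
      simpa using (hasDerivAt_id t).const_mul (1 + k)
    have h2 : HasDerivAt (fun t : ℝ => 1 + k * t ^ 2) (k * (2 * t)) t := by
      have := ((hasDerivAt_pow 2 t).const_mul k).const_add 1
      simpa using this
    have h3 := h1.div h2 (ne_of_gt (hD t))
    refine h3.congr_deriv ?_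
    have hDne : (1 + k * t ^ 2) ≠ 0 := ne_of_gt (hD t)
    simp only [hφ'def]
    ring
  -- injectivity
  have hinj : Set.InjOn φ (Set.Ioo (0:ℝ) 1) := by
    intro a ha b hb hab
    have hDa := ne_of_gt (hD a)
    have hDb := ne_of_gt (hD b)
    have hab' : (1 + k) * a * (1 + k * b ^ 2) = (1 + k) * b * (1 + k * a ^ 2) := by
      have := hab
      rw [hφdef] at this
      field_simp at this
      linear_combination (1 + k) * this
    have hfac : (a - b) * ((1 + k) * (1 - k * a * b)) = 0 := by linear_combination hab'
    have hab1 : a * b < 1 := by nlinarith [mul_pos (sub_pos.mpr ha.2) hb.1, ha.1, hb.2]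
    have hkab : k * a * b < 1 := by nlinarith [mul_pos ha.1 hb.1]
    have hpos : (0:ℝ) < (1 + k) * (1 - k * a * b) := by nlinarith
    have := mul_eq_zero.mp hfac
    rcases this with h | h
    · linarith
    · exact absurd h (ne_of_gt hpos)
  -- image
  have hcont : Continuous φ := by
    apply Continuous.div
    · continuity
    · continuity
    · exact fun t => ne_of_gt (hD t)
  have hφ0 : φ 0 = 0 := by simp [hφdef]
  have hφ1 : φ 1 = 1 := by
    rw [hφdef]
    field_simp
  have himg : φ '' Set.Ioo (0:ℝ) 1 = Set.Ioo (0:ℝ) 1 := by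
    apply Set.Subset.antisymm
    · rintro z ⟨t, ⟨ht0, ht1⟩, rfl⟩
      constructor
      · exact div_pos (by nlinarith) (hD t)
      · rw [div_lt_one (hD t)]
        have hkt : k * t < 1 := by nlinarith [mul_pos (sub_pos.mpr hk1) ht0]
        nlinarith [mul_pos (sub_pos.mpr ht1) (sub_pos.mpr hkt)]
    · intro z hz
      have := intermediate_value_Ioo (le_of_lt one_pos) hcont.continuousOn
      rw [hφ0, hφ1] at this
      exact this hz
  -- change of variables
  have key := MeasureTheory.integral_image_eq_integral_abs_deriv_smul
    (measurableSet_Ioo : MeasurableSet (Set.Ioo (0:ℝ) 1))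
    (fun t _ => (hderiv t).hasDerivWithinAt) hinj
    (fun z => 1 / Real.sqrt ((1 - z ^ 2) * (1 - k₁ ^ 2 * z ^ 2)))
  rw [himg] at key
  have hk1sq : k₁ ^ 2 = 4 * k / (1 + k) ^ 2 := by
    rw [hk₁def, div_pow, mul_pow, Real.sq_sqrt hk0.le]
    ring
  -- pointwise identity on Ioo 0 1
  have hpt : ∀ t ∈ Set.Ioo (0:ℝ) 1,
      |φ' t| • (1 / Real.sqrt ((1 - φ t ^ 2) * (1 - k₁ ^ 2 * φ t ^ 2)))
        = (1 + k) * (1 / Real.sqrt ((1 - t ^ 2) * (1 - k ^ 2 * t ^ 2))) := by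
    rintro t ⟨ht0, ht1⟩
    have hA : (0:ℝ) < 1 - t ^ 2 := by nlinarith
    have hB : (0:ℝ) < 1 - k ^ 2 * t ^ 2 := by nlinarith
    have hC : (0:ℝ) < 1 - k * t ^ 2 := by nlinarith
    have hDt := hD t
    have hDne : (1 + k * t ^ 2) ≠ 0 := ne_of_gt hDt
    have hk1ne : (1 + k) ≠ 0 := ne_of_gt hk1'
    have heq : (1 - φ t ^ 2) * (1 - k₁ ^ 2 * φ t ^ 2)
        = ((1 - t ^ 2) * (1 - k ^ 2 * t ^ 2)) * ((1 - k * t ^ 2) / (1 + k * t ^ 2) ^ 2) ^ 2 := by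
      rw [hk1sq, hφdef]
      field_simp
      ring
    have hq : (0:ℝ) ≤ (1 - k * t ^ 2) / (1 + k * t ^ 2) ^ 2 :=
      div_nonneg hC.le (by positivity)
    have hs : Real.sqrt ((1 - φ t ^ 2) * (1 - k₁ ^ 2 * φ t ^ 2))
        = Real.sqrt ((1 - t ^ 2) * (1 - k ^ 2 * t ^ 2)) * ((1 - k * t ^ 2) / (1 + k * t ^ 2) ^ 2) := by
      rw [heq, Real.sqrt_mul (by positivity), Real.sqrt_sq hq]
    have hsqrtpos : (0:ℝ) < Real.sqrt ((1 - t ^ 2) * (1 - k ^ 2 * t ^ 2)) :=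
      Real.sqrt_pos.mpr (by positivity)
    have habs : |φ' t| = (1 + k) * (1 - k * t ^ 2) / (1 + k * t ^ 2) ^ 2 := by
      rw [hφ'def]
      exact abs_of_pos (by positivity)
    rw [smul_eq_mul, habs, hs]
    field_simp
  calc ellipticF k₁
      = ∫ t in Set.Ioo (0:ℝ) 1,
          |φ' t| • (1 / Real.sqrt ((1 - φ t ^ 2) * (1 - k₁ ^ 2 * φ t ^ 2))) := key
    _ = ∫ t in Set.Ioo (0:ℝ) 1,
          (1 + k) * (1 / Real.sqrt ((1 - t ^ 2) * (1 - k ^ 2 * t ^ 2))) := by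
        apply MeasureTheory.setIntegral_congr_fun measurableSet_Ioo
        intro t ht
        exact hpt t ht
    _ = (1 + k) * ellipticF k := by
        rw [ellipticF, MeasureTheory.integral_const_mul]
end
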